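/- arXiv:1311.5027 — 5 statements merged into one kernel-verified Lean document; each statement's English description precedes it below -/
import Mathlib

section
/- For every ε > 0 there exists N such that for every n ≥ N and every finite simple graph G on n vertices, the vertex CB-partition number satisfies vp_CB(G) ≤ (1 + ε)·n/log₂ n. That is, the edge set of G can be partitioned into edge sets of complete bipartite subgraphs of G so that every vertex of G is contained in at most (1 + ε)·n/log₂ n of these subgraphs. -/
/-- A complete bipartite subgraph of a simple graph `G`, determined by two disjoint
nonempty finsets `A`, `B` of vertices such that every pair `{a, b}` with `a ∈ A`,
`b ∈ B` is an edge of `G`. -/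
structure CBSub {V : Type*} [DecidableEq V] (G : SimpleGraph V) where
  A : Finset V
  B : Finset V
  nonemptyA : A.Nonempty
  nonemptyB : B.Nonempty
  disjointAB : Disjoint A B
  adj : ∀ a ∈ A, ∀ b ∈ B, G.Adj a b

namespace CBSub

variable {V : Type*} [DecidableEq V] {G : SimpleGraph V}

/-- The vertex set of a complete bipartite subgraph. -/
def verts (H : CBSub G) : Finset V := H.A ∪ H.B

/-- The edge set of a complete bipartite subgraph: all pairs `{a, b}` with
`a ∈ A`, `b ∈ B`. -/
def edges (H : CBSub G) : Finset (Sym2 V) := (H.A ×ˢ H.B).image fun ab => s(ab.1, ab.2)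

end CBSub


open Finset
open scoped Classical

namespace EP

variable {n : ℕ}

/-- group of a vertex -/
def grp (s : ℕ) (v : Fin n) : ℕ := v.1 / s

/-- neighbours of `v` in group `j` -/
noncomputable def NS (G : SimpleGraph (Fin n)) (s : ℕ) (v : Fin n) (j : ℕ) : Finset (Fin n) :=
  univ.filter fun a => grp s a = j ∧ G.Adj v a

/-- vertices in later groups whose trace on group `j` is `S` -/
noncomputable def W (G : SimpleGraph (Fin n)) (s : ℕ) (j : ℕ) (S : Finset (Fin n)) :
    Finset (Fin n) :=
  univ.filter fun v => j < grp s v ∧ NS G s v j = S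

abbrev I1 (G : SimpleGraph (Fin n)) (s : ℕ) : Type _ :=
  {p : Fin n × Fin n // p.1 < p.2 ∧ grp s p.1 = grp s p.2 ∧ G.Adj p.1 p.2}

abbrev I2 (G : SimpleGraph (Fin n)) (s : ℕ) : Type _ :=
  {p : Fin n × Finset (Fin n) //
    p.2.Nonempty ∧ (∀ a ∈ p.2, grp s a = p.1.1) ∧ (W G s p.1.1 p.2).Nonempty}

variable {G : SimpleGraph (Fin n)} {s : ℕ}

lemma mem_W {j : ℕ} {S : Finset (Fin n)} {v : Fin n} :
    v ∈ W G s j S ↔ j < grp s v ∧ NS G s v j = S := by simp [W]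

lemma mem_NS {v a : Fin n} {j : ℕ} : a ∈ NS G s v j ↔ grp s a = j ∧ G.Adj v a := by simp [NS]

noncomputable def F (G : SimpleGraph (Fin n)) (s : ℕ) : I1 G s ⊕ I2 G s → CBSub G
  | .inl x => ⟨{x.1.1}, {x.1.2}, singleton_nonempty _, singleton_nonempty _,
      by simpa using x.2.1.ne, by simpa using x.2.2.2⟩
  | .inr x => ⟨x.1.2, W G s x.1.1 x.1.2, x.2.1, x.2.2.2, by
      rw [Finset.disjoint_left]
      intro a haS haW
      rw [mem_W] at haW
      exact absurd (x.2.2.1 a haS) (by omega), by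
      intro a haS b hbW
      rw [mem_W] at hbW
      have : a ∈ NS G s b x.1.1.1 := hbW.2 ▸ haS
      exact (mem_NS.mp this).2.symm⟩

lemma mem_edges_iff {H : CBSub G} {e : Sym2 (Fin n)} :
    e ∈ H.edges ↔ ∃ a ∈ H.A, ∃ b ∈ H.B, s(a, b) = e := by
  simp only [CBSub.edges, Finset.mem_image, Finset.mem_product, Prod.exists]
  tauto

lemma edges_inl (x : I1 G s) : (F G s (.inl x)).edges = {s(x.1.1, x.1.2)} := by
  simp [F, CBSub.edges]


lemma case_same {u v : Fin n} (huv : G.Adj u v) (hlt : u < v) (hg : grp s u = grp s v) :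
    ∃! x : I1 G s ⊕ I2 G s, s(u, v) ∈ (F G s x).edges := by
  refine ⟨.inl ⟨(u, v), hlt, hg, huv⟩, by simp only [edges_inl, mem_singleton], ?_⟩
  rintro (y | y) hy
  · obtain ⟨⟨a, b⟩, h1', h2', h3'⟩ := y
    rw [edges_inl, mem_singleton] at hy
    rcases Sym2.eq_iff.mp hy with ⟨h1, h2⟩ | ⟨h1, h2⟩
    · simp only [Sum.inl.injEq, Subtype.mk.injEq, Prod.mk.injEq]
      exact ⟨h1.symm, h2.symm⟩
    · exfalso
      subst h1; subst h2
      exact absurd (hlt.trans h1') (lt_irrefl _)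
  · exfalso
    obtain ⟨⟨j, S⟩, hS1, hS2, hS3⟩ := y
    rw [mem_edges_iff] at hy
    obtain ⟨a, haA, b, hbB, hab⟩ := hy
    have haS : a ∈ S := haA
    have hbW : b ∈ W G s (j : ℕ) S := hbB
    rw [mem_W] at hbW
    obtain ⟨hb1, hb2⟩ := hbW
    have hga : grp s a = (j : ℕ) := hS2 a haS
    rcases Sym2.eq_iff.mp hab with ⟨h1, h2⟩ | ⟨h1, h2⟩ <;> subst h1 <;> subst h2 <;> omega

lemma case_cross {u v : Fin n} (huv : G.Adj u v) (hg : grp s u < grp s v) :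
    ∃! x : I1 G s ⊕ I2 G s, s(u, v) ∈ (F G s x).edges := by
  have hjlt : grp s u < n := lt_of_le_of_lt (Nat.div_le_self _ _) u.isLt
  have huS : u ∈ NS G s v (grp s u) := mem_NS.mpr ⟨rfl, huv.symm⟩
  have hvW : v ∈ W G s (grp s u) (NS G s v (grp s u)) := mem_W.mpr ⟨hg, rfl⟩
  refine ⟨.inr ⟨(⟨grp s u, hjlt⟩, NS G s v (grp s u)),
      ⟨⟨u, huS⟩, fun a ha => (mem_NS.mp ha).1, ⟨v, hvW⟩⟩⟩,
    mem_edges_iff.mpr ⟨u, huS, v, hvW, rfl⟩, ?_⟩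
  rintro (y | y) hy
  · exfalso
    obtain ⟨⟨a, b⟩, h1', h2', h3'⟩ := y
    rw [edges_inl, mem_singleton] at hy
    dsimp only at hy h2'
    rcases Sym2.eq_iff.mp hy with ⟨h1, h2⟩ | ⟨h1, h2⟩ <;> subst h1 <;> subst h2 <;> omega
  · obtain ⟨⟨j, S⟩, hS1, hS2, hS3⟩ := y
    rw [mem_edges_iff] at hy
    obtain ⟨a, haA, b, hbB, hab⟩ := hy
    have haS : a ∈ S := haA
    have hbW : b ∈ W G s (j : ℕ) S := hbB
    rw [mem_W] at hbW
    obtain ⟨hb1, hb2⟩ := hbW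
    have hga : grp s a = (j : ℕ) := hS2 a haS
    rcases Sym2.eq_iff.mp hab with ⟨h1, h2⟩ | ⟨h1, h2⟩
    · subst h1; subst h2
      simp only [Sum.inr.injEq, Subtype.mk.injEq, Prod.mk.injEq]
      refine ⟨Fin.ext hga.symm, ?_⟩
      rw [← hb2, hga]
    · exfalso
      subst h1; subst h2
      omega

lemma exists_unique_mem {e : Sym2 (Fin n)} (he : e ∈ G.edgeSet) :
    ∃! x : I1 G s ⊕ I2 G s, e ∈ (F G s x).edges := by
  induction e with
  | _ u v =>
  rw [SimpleGraph.mem_edgeSet] at he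
  rcases lt_trichotomy (grp s u) (grp s v) with h | h | h
  · exact case_cross he h
  · rcases lt_trichotomy u v with h' | h' | h'
    · exact case_same he h' h
    · exact absurd h' (by simp [he.ne])
    · rw [Sym2.eq_swap]
      exact case_same he.symm h' h.symm
  · rw [Sym2.eq_swap]
    exact case_cross he.symm h

lemma grp_card_le (hs : 1 ≤ s) (j : ℕ) :
    (univ.filter fun w : Fin n => grp s w = j).card ≤ s := by
  have h : (univ.filter fun w : Fin n => grp s w = j).card ≤ (Finset.Ico (j*s) (j*s+s)).card := by
    apply card_le_card_of_injOn (fun w : Fin n => (w : ℕ))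
    · intro w hw
      simp only [Finset.mem_coe, mem_filter, mem_univ, true_and] at hw
      unfold grp at hw
      rw [Finset.mem_coe, Finset.mem_Ico]
      constructor
      · calc j * s = (w : ℕ) / s * s := by rw [hw]
          _ ≤ (w : ℕ) := Nat.div_mul_le_self _ _
      · calc (w : ℕ) < (j + 1) * s := (Nat.div_lt_iff_lt_mul (by omega)).mp (by omega)
          _ = j * s + s := Nat.succ_mul j s
    · exact fun w _ w' _ h => Fin.val_injective h
  have hc : (Finset.Ico (j*s) (j*s+s)).card = s := by rw [Nat.card_Ico]; omega
  omega

lemma verts_inl (x : I1 G s) : (F G s (.inl x)).verts = {x.1.1} ∪ {x.1.2} := by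
  simp [F, CBSub.verts]

lemma verts_inr (x : I2 G s) : (F G s (.inr x)).verts = x.1.2 ∪ W G s (x.1.1 : ℕ) x.1.2 := by
  simp [F, CBSub.verts]

lemma count1_le (hs : 1 ≤ s) (v : Fin n) :
    (univ.filter fun x : I1 G s => v ∈ (F G s (.inl x)).verts).card ≤ s := by
  have h : (univ.filter fun x : I1 G s => v ∈ (F G s (.inl x)).verts).card
      ≤ (univ.filter fun w : Fin n => grp s w = grp s v ∧ w ≠ v).card := by
    apply card_le_card_of_injOn (fun x => if x.1.1 = v then x.1.2 else x.1.1)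
    · intro x hx
      simp only [Finset.mem_coe, mem_filter, mem_univ, true_and, verts_inl, Finset.mem_union,
        mem_singleton] at hx ⊢
      obtain ⟨hlt, hgr, -⟩ := x.2
      by_cases h1 : x.1.1 = v
      · rw [if_pos h1]
        subst h1
        exact ⟨hgr.symm, fun hc => absurd (hc ▸ hlt) (lt_irrefl _)⟩
      · rw [if_neg h1]
        rcases hx with h2 | h2
        · exact absurd h2.symm h1
        · subst h2
          exact ⟨hgr, h1⟩
    · intro x hx y hy hxy
      dsimp only at hxy
      simp only [Finset.coe_filter, Set.mem_setOf_eq, mem_univ, true_and, verts_inl,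
        Finset.mem_union, mem_singleton] at hx hy
      have hxlt : x.1.1 < x.1.2 := x.2.1
      have hylt : y.1.1 < y.1.2 := y.2.1
      have key : x.1 = y.1 := by
        by_cases h1 : x.1.1 = v <;> by_cases h2 : y.1.1 = v
        · simp only [if_pos h1, if_pos h2] at hxy
          exact Prod.ext (h1.trans h2.symm) hxy
        · simp only [if_pos h1, if_neg h2] at hxy
          exfalso
          have hv2 : v = y.1.2 := by
            rcases hy with h | h
            · exact absurd h.symm h2
            · exact h
          rw [h1, hxy] at hxlt
          rw [← hv2] at hylt
          exact absurd (hxlt.trans hylt) (lt_irrefl v)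
        · simp only [if_neg h1, if_pos h2] at hxy
          exfalso
          have hv1 : v = x.1.2 := by
            rcases hx with h | h
            · exact absurd h.symm h1
            · exact h
          rw [h2, ← hxy] at hylt
          rw [← hv1] at hxlt
          exact absurd (hylt.trans hxlt) (lt_irrefl v)
        · simp only [if_neg h1, if_neg h2] at hxy
          have hv1 : v = x.1.2 := by
            rcases hx with h | h
            · exact absurd h.symm h1
            · exact h
          have hv2 : v = y.1.2 := by
            rcases hy with h | h
            · exact absurd h.symm h2
            · exact h
          exact Prod.ext hxy (hv1.symm.trans hv2)
      exact Subtype.ext key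
  have h2 : (univ.filter fun w : Fin n => grp s w = grp s v ∧ w ≠ v).card
      ≤ (univ.filter fun w : Fin n => grp s w = grp s v).card :=
    card_le_card (fun w hw => by
      simp only [mem_filter] at hw ⊢
      exact ⟨hw.1, hw.2.1⟩)
  exact h.trans (h2.trans (grp_card_le hs _))

lemma count2a_le (hs : 1 ≤ s) (v : Fin n) :
    (univ.filter fun x : I2 G s => v ∈ x.1.2).card ≤ 2 ^ s := by
  have h : (univ.filter fun x : I2 G s => v ∈ x.1.2).card
      ≤ ((univ.filter fun w : Fin n => grp s w = grp s v).powerset).card := by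
    apply card_le_card_of_injOn (fun x : I2 G s => x.1.2)
    · intro x hx
      simp only [Finset.mem_coe, mem_filter, mem_univ, true_and] at hx
      rw [Finset.mem_coe, Finset.mem_powerset]
      intro a ha
      simp only [mem_filter, mem_univ, true_and]
      rw [x.2.2.1 a ha, ← x.2.2.1 v hx]
    · intro x hx y hy hxy
      dsimp only at hxy
      simp only [Finset.coe_filter, Set.mem_setOf_eq, mem_univ, true_and] at hx hy
      apply Subtype.ext
      apply Prod.ext _ hxy
      apply Fin.ext
      rw [← x.2.2.1 v hx, ← y.2.2.1 v (hxy ▸ hx)]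
  rw [Finset.card_powerset] at h
  exact h.trans (Nat.pow_le_pow_right (by omega) (grp_card_le hs _))

lemma count2b_le (v : Fin n) :
    (univ.filter fun x : I2 G s => v ∈ W G s (x.1.1 : ℕ) x.1.2).card ≤ n / s := by
  have h : (univ.filter fun x : I2 G s => v ∈ W G s (x.1.1 : ℕ) x.1.2).card
      ≤ (Finset.range (grp s v)).card := by
    apply card_le_card_of_injOn (fun x : I2 G s => (x.1.1 : ℕ))
    · intro x hx
      simp only [Finset.mem_coe, mem_filter, mem_univ, true_and, mem_W] at hx
      rw [Finset.mem_coe, Finset.mem_range]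
      exact hx.1
    · intro x hx y hy hxy
      dsimp only at hxy
      simp only [Finset.coe_filter, Set.mem_setOf_eq, mem_univ, true_and, mem_W] at hx hy
      apply Subtype.ext
      refine Prod.ext (Fin.ext hxy) ?_
      rw [← hx.2, ← hy.2, hxy]
  rw [Finset.card_range] at h
  exact h.trans (Nat.div_le_div_right (le_of_lt v.isLt))

lemma load_le (hs : 1 ≤ s) (v : Fin n) :
    (univ.filter fun x : I1 G s ⊕ I2 G s => v ∈ (F G s x).verts).card ≤ s + 2 ^ s + n / s := by
  have hL : (univ.filter fun x : I1 G s ⊕ I2 G s => v ∈ (F G s x).verts).toLeft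
      = univ.filter fun x : I1 G s => v ∈ (F G s (.inl x)).verts := by
    ext x
    simp [Finset.mem_toLeft]
  have hR : (univ.filter fun x : I1 G s ⊕ I2 G s => v ∈ (F G s x).verts).toRight
      = univ.filter fun x : I2 G s => v ∈ (F G s (.inr x)).verts := by
    ext x
    simp [Finset.mem_toRight]
  rw [← Finset.card_toLeft_add_card_toRight, hL, hR]
  have h2 : (univ.filter fun x : I2 G s => v ∈ (F G s (.inr x)).verts).card ≤ 2 ^ s + n / s := by
    have hsub : (univ.filter fun x : I2 G s => v ∈ (F G s (.inr x)).verts)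
        ⊆ (univ.filter fun x : I2 G s => v ∈ x.1.2)
          ∪ (univ.filter fun x : I2 G s => v ∈ W G s (x.1.1 : ℕ) x.1.2) := by
      intro x hx
      simp only [mem_filter, mem_univ, true_and, verts_inr, Finset.mem_union] at hx ⊢
      tauto
    calc (univ.filter fun x : I2 G s => v ∈ (F G s (.inr x)).verts).card
        ≤ ((univ.filter fun x : I2 G s => v ∈ x.1.2)
          ∪ (univ.filter fun x : I2 G s => v ∈ W G s (x.1.1 : ℕ) x.1.2)).card :=
          card_le_card hsub
      _ ≤ (univ.filter fun x : I2 G s => v ∈ x.1.2).card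
          + (univ.filter fun x : I2 G s => v ∈ W G s (x.1.1 : ℕ) x.1.2).card :=
          card_union_le _ _
      _ ≤ 2 ^ s + n / s := add_le_add (count2a_le hs v) (count2b_le v)
  have h1 := count1_le (G := G) hs v
  omega

theorem construction (G : SimpleGraph (Fin n)) (s : ℕ) (hs : 1 ≤ s) :
    ∃ (M : ℕ) (f : Fin M → CBSub G),
      (∀ e ∈ G.edgeSet, ∃! i : Fin M, e ∈ (f i).edges) ∧
      ∀ v : Fin n, (univ.filter fun i : Fin M => v ∈ (f i).verts).card ≤ s + 2 ^ s + n / s := by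
  obtain ⟨e⟩ : Nonempty ((I1 G s ⊕ I2 G s) ≃ Fin (Fintype.card (I1 G s ⊕ I2 G s))) :=
    ⟨Fintype.equivFin _⟩
  refine ⟨Fintype.card (I1 G s ⊕ I2 G s), fun i => F G s (e.symm i), fun ed hed => ?_, fun v => ?_⟩
  · obtain ⟨x, hx, hu⟩ := exists_unique_mem (G := G) (s := s) hed
    refine ⟨e x, by show ed ∈ (F G s (e.symm (e x))).edges; rwa [Equiv.symm_apply_apply], fun i hi => ?_⟩
    rw [← hu (e.symm i) hi, Equiv.apply_symm_apply]
  · have hcard : (univ.filter fun i : Fin (Fintype.card (I1 G s ⊕ I2 G s)) =>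
        v ∈ (F G s (e.symm i)).verts).card
        = (univ.filter fun x : I1 G s ⊕ I2 G s => v ∈ (F G s x).verts).card := by
      apply Finset.card_equiv e.symm
      intro i
      simp only [mem_filter, mem_univ, true_and]
    exact le_trans (le_of_eq hcard) (load_le hs v)

end EP
/-- **Erdős–Pyber theorem, integer version.**  For every `ε > 0` there is `N` such
that for every `n ≥ N` and every simple graph `G` on `n` vertices, the edge set of
`G` can be partitioned into the edge sets of complete bipartite subgraphs of `G`
in such a way that every vertex is contained in at most `(1 + ε) · n / log₂ n` of
these subgraphs; i.e. `vp_CB(G) ≤ (1 + ε) · n / log₂ n`. -/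
theorem erdos_pyber_integer :
    ∀ ε : ℝ, 0 < ε → ∃ N : ℕ, ∀ n : ℕ, N ≤ n → ∀ G : SimpleGraph (Fin n),
      ∃ (M : ℕ) (f : Fin M → CBSub G),
        (∀ e ∈ G.edgeSet, ∃! i : Fin M, e ∈ (f i).edges) ∧
        ∀ v : Fin n,
          (((Finset.univ.filter fun i : Fin M => v ∈ (f i).verts).card : ℝ) ≤
            (1 + ε) * n / Real.logb 2 n) := by
  intro ε hε
  have hδ : 0 < ε / 2 := by positivity
  set δ : ℝ := ε / 2 with hδdef
  set c : ℝ := (1 + δ)⁻¹ with hcdef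
  have hc0 : 0 < c := by positivity
  have hc1 : c < 1 := by
    rw [hcdef]
    exact inv_lt_one_of_one_lt₀ (by linarith)
  set K : ℝ := (Real.log 2)⁻¹ with hKdef
  open Filter Asymptotics Real in
  have master : (fun x : ℝ => ((K * Real.log x + 1) + 2 * x ^ c) * (K * Real.log x))
      =o[Filter.atTop] (id : ℝ → ℝ) := by
    have hhalf : Real.log =o[atTop] (fun x : ℝ => x ^ (2⁻¹ : ℝ)) :=
      isLittleO_log_rpow_atTop (by norm_num)
    have p1 : (fun x : ℝ => Real.log x * Real.log x) =o[atTop] (id : ℝ → ℝ) := by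
      refine (hhalf.mul hhalf).congr' EventuallyEq.rfl ?_
      filter_upwards [eventually_gt_atTop (0 : ℝ)] with x hx
      rw [← Real.rpow_add hx]
      norm_num
    have p2 : Real.log =o[atTop] (id : ℝ → ℝ) := Real.isLittleO_log_id_atTop
    have p3 : (fun x : ℝ => x ^ c * Real.log x) =o[atTop] (id : ℝ → ℝ) := by
      have hlit : Real.log =o[atTop] (fun x : ℝ => x ^ (1 - c)) :=
        isLittleO_log_rpow_atTop (by linarith)
      refine ((isBigO_refl (fun x : ℝ => x ^ c) atTop).mul_isLittleO hlit).congr'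
        EventuallyEq.rfl ?_
      filter_upwards [eventually_gt_atTop (0 : ℝ)] with x hx
      rw [← Real.rpow_add hx]
      norm_num
    have hsum := ((p1.const_mul_left (K * K)).add (p2.const_mul_left K)).add
      (p3.const_mul_left (2 * K))
    refine hsum.congr' (Filter.Eventually.of_forall fun x => by ring) EventuallyEq.rfl
  have hbound : ∀ᶠ x : ℝ in Filter.atTop,
      ((K * Real.log x + 1) + 2 * x ^ c) * (K * Real.log x) ≤ δ * x := by
    filter_upwards [master.def hδ, Filter.eventually_ge_atTop (1 : ℝ)] with x h1 h2
    calc ((K * Real.log x + 1) + 2 * x ^ c) * (K * Real.log x)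
        ≤ ‖((K * Real.log x + 1) + 2 * x ^ c) * (K * Real.log x)‖ := le_norm_self _
      _ ≤ δ * ‖id x‖ := h1
      _ = δ * x := by rw [id, Real.norm_eq_abs, abs_of_nonneg (by linarith)]
  have hnat : ∀ᶠ m : ℕ in Filter.atTop,
      ((K * Real.log m + 1) + 2 * (m : ℝ) ^ c) * (K * Real.log m) ≤ δ * m ∧ 2 ≤ m := by
    exact (tendsto_natCast_atTop_atTop.eventually hbound).and (Filter.eventually_ge_atTop 2)
  rw [Filter.eventually_atTop] at hnat
  obtain ⟨N, hN⟩ := hnat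
  refine ⟨N, fun n hn G => ?_⟩
  obtain ⟨hP, hn2⟩ := hN n hn
  have hnpos : (0 : ℝ) < n := by
    have : (2 : ℝ) ≤ n := by exact_mod_cast hn2
    linarith
  set L : ℝ := Real.logb 2 n with hLdef
  have hL1 : 1 ≤ L := by
    rw [hLdef, Real.le_logb_iff_rpow_le (by norm_num) hnpos]
    rw [Real.rpow_one]
    exact_mod_cast hn2
  have hL0 : 0 < L := lt_of_lt_of_le one_pos hL1
  set s : ℕ := ⌈L / (1 + δ)⌉₊ with hsdef
  have hs1 : 1 ≤ s := by
    rw [hsdef]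
    exact Nat.one_le_iff_ne_zero.mpr (Nat.ceil_pos.mpr (by positivity)).ne'
  have hsge : L / (1 + δ) ≤ (s : ℝ) := Nat.le_ceil _
  have hsle : (s : ℝ) ≤ L / (1 + δ) + 1 := le_of_lt (Nat.ceil_lt_add_one (by positivity))
  have hspos : (0 : ℝ) < s := by exact_mod_cast hs1
  obtain ⟨M, f, hpart, hload⟩ := EP.construction G s hs1
  refine ⟨M, f, hpart, fun v => ?_⟩
  have h0 : ((Finset.univ.filter fun i : Fin M => v ∈ (f i).verts).card : ℝ)
      ≤ ((s + 2 ^ s + n / s : ℕ) : ℝ) := Nat.cast_le.mpr (hload v)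
  have hKL : K * Real.log n = L := by
    rw [hLdef, ← Real.log_div_log, hKdef]
    ring
  have hpow : (2 : ℝ) ^ s ≤ 2 * (n : ℝ) ^ c := by
    have e1 : (2 : ℝ) ^ s = (2 : ℝ) ^ ((s : ℕ) : ℝ) := (Real.rpow_natCast 2 s).symm
    rw [e1]
    calc (2 : ℝ) ^ ((s : ℕ) : ℝ) ≤ (2 : ℝ) ^ (L / (1 + δ) + 1) :=
          Real.rpow_le_rpow_of_exponent_le one_le_two hsle
      _ = 2 * (2 : ℝ) ^ (L * c) := by
          rw [Real.rpow_add (by norm_num : (0:ℝ) < 2), Real.rpow_one, div_eq_mul_inv, hcdef]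
          ring
      _ = 2 * ((n : ℝ)) ^ c := by
          rw [Real.rpow_mul (by norm_num : (0:ℝ) ≤ 2), hLdef,
            Real.rpow_logb (by norm_num) (by norm_num) hnpos]
  have hdiv : ((n / s : ℕ) : ℝ) ≤ (1 + δ) * n / L := by
    calc ((n / s : ℕ) : ℝ) ≤ (n : ℝ) / (s : ℝ) := Nat.cast_div_le
      _ ≤ (n : ℝ) / (L / (1 + δ)) :=
          div_le_div_of_nonneg_left (le_of_lt hnpos) (by positivity) hsge
      _ = (1 + δ) * n / L := by
          rw [div_div_eq_mul_div]
          ring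
  have hmain : (s : ℝ) + 2 ^ s ≤ δ * n / L := by
    rw [le_div_iff₀ hL0]
    calc ((s : ℝ) + 2 ^ s) * L ≤ ((L / (1 + δ) + 1) + 2 * (n : ℝ) ^ c) * L := by
          apply mul_le_mul_of_nonneg_right _ (le_of_lt hL0)
          exact add_le_add hsle hpow
      _ ≤ ((L + 1) + 2 * (n : ℝ) ^ c) * L := by
          apply mul_le_mul_of_nonneg_right _ (le_of_lt hL0)
          have : L / (1 + δ) ≤ L := by
            apply div_le_self (le_of_lt hL0) (by linarith)
          linarith
      _ ≤ δ * n := by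
          rw [← hKL]
          exact hP
  calc ((Finset.univ.filter fun i : Fin M => v ∈ (f i).verts).card : ℝ)
      ≤ ((s + 2 ^ s + n / s : ℕ) : ℝ) := h0
    _ = (s : ℝ) + 2 ^ s + ((n / s : ℕ) : ℝ) := by push_cast; ring
    _ ≤ δ * n / L + (1 + δ) * n / L := by
        have := add_le_add hmain hdiv
        linarith
    _ = (1 + ε) * n / L := by
        rw [hδdef]
        ring
end

section
/- Fix an integer d ≥ 2. For every ε > 0 there exists N such that for every n ≥ N and every d-uniform hypergraph H on n vertices, the vertex CB-partition number satisfies vp_CB(H) ≤ (1/(d−2)! + ε)·n^(d−1)/log₂ n. That is, the edge set of H can be partitioned into edge sets of d-cuph subhypergraphs of H so that every vertex is contained in at most (1/(d−2)! + ε)·n^(d−1)/log₂ n of these subhypergraphs. -/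
/-- A `d`-cuph (complete `d`-uniform `d`-partite hypergraph) subhypergraph of the
`d`-uniform hypergraph with vertex type `V` and edge set `E`: its vertex set is
partitioned into `d` nonempty pairwise disjoint parts, its edges are exactly the
`d`-element sets meeting every part in a single vertex, and all of its edges
belong to `E`. -/
structure DCuphSub (V : Type*) [Fintype V] [DecidableEq V] (d : ℕ)
    (E : Finset (Finset V)) where
  parts : Fin d → Finset V
  nonempty : ∀ i, (parts i).Nonempty
  disjoint : ∀ i j, i ≠ j → Disjoint (parts i) (parts j)
  sub : ∀ e : Finset V,
    (e ⊆ Finset.univ.biUnion parts ∧ ∀ i, (e ∩ parts i).card = 1) → e ∈ E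

namespace DCuphSub

variable {V : Type*} [Fintype V] [DecidableEq V] {d : ℕ} {E : Finset (Finset V)}

/-- The vertex set of a `d`-cuph subhypergraph. -/
def verts (C : DCuphSub V d E) : Finset V := Finset.univ.biUnion C.parts

/-- The edge set of a `d`-cuph subhypergraph: all sets meeting every part in
exactly one vertex. -/
def edges (C : DCuphSub V d E) : Finset (Finset V) :=
  Finset.univ.filter fun e => e ⊆ C.verts ∧ ∀ i, (e ∩ C.parts i).card = 1

end DCuphSub

namespace EPaux
open Finset

variable {n : ℕ} (s : ℕ) (E : Finset (Finset (Fin n)))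

/-- block of residues: vertices `u` with `u / s = b`. -/
def Bblk (b : ℕ) : Finset (Fin n) := univ.filter fun u => (u : ℕ) / s = b

/-- the "class" of `y` over block `b` w.r.t. the (d-2)-set `S`. -/
def cls (S : Finset (Fin n)) (b : ℕ) (y : Fin n) : Finset (Fin n) :=
  univ.filter fun u => (u : ℕ) / s = b ∧ u < y ∧ (∀ x ∈ S, x < u) ∧ insert u (insert y S) ∈ E

def Yset (S : Finset (Fin n)) (b : ℕ) (N : Finset (Fin n)) : Finset (Fin n) :=
  univ.filter fun y => cls s E S b y = N

lemma mem_cls {S : Finset (Fin n)} {b : ℕ} {y u : Fin n} :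
    u ∈ cls s E S b y ↔ (u : ℕ) / s = b ∧ u < y ∧ (∀ x ∈ S, x < u) ∧ insert u (insert y S) ∈ E := by
  simp [cls]

lemma mem_Yset {S N : Finset (Fin n)} {b : ℕ} {y : Fin n} :
    y ∈ Yset s E S b N ↔ cls s E S b y = N := by simp [Yset]

lemma disj_NY {S N : Finset (Fin n)} {b : ℕ} : Disjoint N (Yset s E S b N) := by
  rw [Finset.disjoint_left]
  intro z hzN hzY
  rw [mem_Yset] at hzY
  rw [← hzY, mem_cls] at hzN
  exact lt_irrefl z hzN.2.1

lemma not_mem_N_of_mem_S {S N : Finset (Fin n)} {b : ℕ}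
    (hY : (Yset s E S b N).Nonempty) {x : Fin n} (hx : x ∈ S) : x ∉ N := by
  obtain ⟨y, hy⟩ := hY
  rw [mem_Yset] at hy
  intro hxN
  rw [← hy, mem_cls] at hxN
  exact lt_irrefl x (hxN.2.2.1 x hx)

lemma not_mem_Y_of_mem_S {S N : Finset (Fin n)} {b : ℕ}
    (hN : N.Nonempty) {x : Fin n} (hx : x ∈ S) : x ∉ Yset s E S b N := by
  obtain ⟨u, hu⟩ := hN
  intro hxY
  rw [mem_Yset] at hxY
  rw [← hxY, mem_cls] at hu
  exact absurd (hu.2.2.1 x hx) (not_lt.mpr hu.2.1.le)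

/-- the list of parts. -/
def lst (S N : Finset (Fin n)) (b : ℕ) : List (Finset (Fin n)) :=
  ((S.sort (· ≤ ·)).map (fun x => ({x} : Finset (Fin n)))) ++ [N, Yset s E S b N]

lemma length_lst (S N : Finset (Fin n)) (b : ℕ) : (lst s E S N b).length = S.card + 2 := by
  simp [lst]

lemma mem_lst {S N : Finset (Fin n)} {b : ℕ} {p : Finset (Fin n)} :
    p ∈ lst s E S N b ↔ (∃ x ∈ S, p = {x}) ∨ p = N ∨ p = Yset s E S b N := by
  simp [lst, eq_comm]

lemma pairwise_lst {S N : Finset (Fin n)} {b : ℕ}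
    (hN : N.Nonempty) (hY : (Yset s E S b N).Nonempty) :
    (lst s E S N b).Pairwise Disjoint := by
  rw [lst, List.pairwise_append]
  refine ⟨?_, ?_, ?_⟩
  · rw [List.pairwise_map]
    refine ((S.sort_nodup (· ≤ ·)).imp ?_)
    intro a b hab
    exact Finset.disjoint_singleton.mpr hab
  · simp only [List.pairwise_cons, List.mem_singleton]
    refine ⟨fun p hp => ?_, by simp⟩
    subst hp; exact disj_NY s E
  · intro a ha p hp
    simp only [List.mem_map] at ha
    obtain ⟨x, hxs, rfl⟩ := ha
    have hxS : x ∈ S := (Finset.mem_sort _).mp hxs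
    simp only [List.mem_cons, List.mem_singleton, List.not_mem_nil, or_false] at hp
    rcases hp with rfl | rfl
    · exact Finset.disjoint_singleton_left.mpr (not_mem_N_of_mem_S s E hY hxS)
    · exact Finset.disjoint_singleton_left.mpr (not_mem_Y_of_mem_S s E hN hxS)


variable (d : ℕ)

/-- build the `d`-cuph from a valid triple. -/
def mk (hd : 2 ≤ d) (S N : Finset (Fin n)) (b : ℕ) (hS : S.card = d - 2)
    (hN : N.Nonempty) (hY : (Yset s E S b N).Nonempty) : DCuphSub (Fin n) d E :=
  have hlen : d = (lst s E S N b).length := by rw [length_lst, hS]; omega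
  { parts := fun i => (lst s E S N b).get (Fin.cast hlen i)
    nonempty := by
      intro i
      have hmem : (lst s E S N b).get (Fin.cast hlen i) ∈ lst s E S N b :=
        (lst s E S N b).get_mem _
      rw [mem_lst] at hmem
      rcases hmem with ⟨x, _, hx⟩ | h | h
      · rw [hx]; exact Finset.singleton_nonempty x
      · rw [h]; exact hN
      · rw [h]; exact hY
    disjoint := by
      intro i j hij
      have hp := (List.pairwise_iff_get).mp (pairwise_lst s E hN hY)
      have hne : Fin.cast hlen i ≠ Fin.cast hlen j := by
        intro h
        have hv : (i : ℕ) = (j : ℕ) := by simpa [Fin.ext_iff] using h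
        exact hij (Fin.ext hv)
      rcases lt_or_gt_of_ne hne with h | h
      · exact hp _ _ h
      · exact (hp _ _ h).symm
    sub := by
      intro e he
      obtain ⟨hsub, hcard⟩ := he
      have hcard' : ∀ p ∈ lst s E S N b, (e ∩ p).card = 1 := by
        intro p hp
        obtain ⟨k, hk⟩ := List.mem_iff_get.mp hp
        have : p = (lst s E S N b).get (Fin.cast hlen (Fin.cast hlen.symm k)) := by
          rw [← hk]; congr 1
          all_goals exact Fin.ext rfl
        rw [this]; exact hcard (Fin.cast hlen.symm k)
      have hNl : N ∈ lst s E S N b := (mem_lst s E).mpr (Or.inr (Or.inl rfl))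
      have hYl : Yset s E S b N ∈ lst s E S N b := (mem_lst s E).mpr (Or.inr (Or.inr rfl))
      obtain ⟨u, hu⟩ := Finset.card_eq_one.mp (hcard' N hNl)
      obtain ⟨y, hy⟩ := Finset.card_eq_one.mp (hcard' (Yset s E S b N) hYl)
      have huN : u ∈ N := (Finset.mem_inter.mp (hu ▸ Finset.mem_singleton_self u)).2
      have hue : u ∈ e := (Finset.mem_inter.mp (hu ▸ Finset.mem_singleton_self u)).1
      have hyY : y ∈ Yset s E S b N := (Finset.mem_inter.mp (hy ▸ Finset.mem_singleton_self y)).2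
      have hye : y ∈ e := (Finset.mem_inter.mp (hy ▸ Finset.mem_singleton_self y)).1
      have hSe : ∀ x ∈ S, x ∈ e := by
        intro x hx
        have hxl : ({x} : Finset (Fin n)) ∈ lst s E S N b :=
          (mem_lst s E).mpr (Or.inl ⟨x, hx, rfl⟩)
        have h1 := hcard' _ hxl
        have hne : (e ∩ {x}).Nonempty := Finset.card_pos.mp (by omega)
        obtain ⟨z, hz⟩ := hne
        rcases Finset.mem_inter.mp hz with ⟨hze, hzx⟩
        rwa [Finset.mem_singleton.mp hzx] at hze
      have hE' : insert u (insert y S) ∈ E := by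
        have : u ∈ cls s E S b y := by
          rw [(mem_Yset s E).mp hyY]; exact huN
        exact ((mem_cls s E).mp this).2.2.2
      have heq : e = insert u (insert y S) := by
        apply Finset.Subset.antisymm
        · intro w hw
          have hwin := hsub hw
          rw [Finset.mem_biUnion] at hwin
          obtain ⟨i, _, hwp⟩ := hwin
          have hpl : (lst s E S N b).get (Fin.cast hlen i) ∈ lst s E S N b :=
            (lst s E S N b).get_mem _
          rw [mem_lst] at hpl
          rcases hpl with ⟨x, hxS, hx⟩ | h | h
          · rw [hx] at hwp
            have := Finset.mem_singleton.mp hwp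
            subst this
            exact Finset.mem_insert.mpr (Or.inr (Finset.mem_insert.mpr (Or.inr hxS)))
          · rw [h] at hwp
            have : w ∈ e ∩ N := Finset.mem_inter.mpr ⟨hw, hwp⟩
            rw [hu, Finset.mem_singleton] at this
            subst this; exact Finset.mem_insert_self _ _
          · rw [h] at hwp
            have : w ∈ e ∩ Yset s E S b N := Finset.mem_inter.mpr ⟨hw, hwp⟩
            rw [hy, Finset.mem_singleton] at this
            subst this
            exact Finset.mem_insert.mpr (Or.inr (Finset.mem_insert_self _ _))
        · intro w hw
          rcases Finset.mem_insert.mp hw with rfl | hw'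
          · exact hue
          rcases Finset.mem_insert.mp hw' with rfl | hw''
          · exact hye
          · exact hSe w hw''
      rw [heq]; exact hE' }


lemma parts_mem_lst (hd : 2 ≤ d) (S N : Finset (Fin n)) (b : ℕ) (hS : S.card = d - 2)
    (hN : N.Nonempty) (hY : (Yset s E S b N).Nonempty) (i : Fin d) :
    (mk s E d hd S N b hS hN hY).parts i ∈ lst s E S N b := by
  show (lst s E S N b).get _ ∈ lst s E S N b
  exact (lst s E S N b).get_mem _

lemma exists_parts_eq (hd : 2 ≤ d) (S N : Finset (Fin n)) (b : ℕ) (hS : S.card = d - 2)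
    (hN : N.Nonempty) (hY : (Yset s E S b N).Nonempty) {p : Finset (Fin n)}
    (hp : p ∈ lst s E S N b) :
    ∃ i : Fin d, (mk s E d hd S N b hS hN hY).parts i = p := by
  have hlen : d = (lst s E S N b).length := by rw [length_lst, hS]; omega
  obtain ⟨k, hk⟩ := List.mem_iff_get.mp hp
  refine ⟨Fin.cast hlen.symm k, ?_⟩
  show (lst s E S N b).get _ = p
  rw [← hk]
  congr 1

lemma verts_mk (hd : 2 ≤ d) (S N : Finset (Fin n)) (b : ℕ) (hS : S.card = d - 2)
    (hN : N.Nonempty) (hY : (Yset s E S b N).Nonempty) :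
    (mk s E d hd S N b hS hN hY).verts = S ∪ N ∪ Yset s E S b N := by
  ext w
  simp only [DCuphSub.verts, Finset.mem_biUnion, Finset.mem_univ, true_and,
    Finset.mem_union]
  constructor
  · rintro ⟨i, hw⟩
    have := parts_mem_lst s E d hd S N b hS hN hY i
    rw [mem_lst] at this
    rcases this with ⟨x, hxS, hx⟩ | h | h
    · rw [hx, Finset.mem_singleton] at hw; subst hw; exact Or.inl (Or.inl hxS)
    · rw [h] at hw; exact Or.inl (Or.inr hw)
    · rw [h] at hw; exact Or.inr hw
  · intro hw
    rcases hw with (hw | hw) | hw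
    · obtain ⟨i, hi⟩ := exists_parts_eq s E d hd S N b hS hN hY
        ((mem_lst s E).mpr (Or.inl ⟨w, hw, rfl⟩))
      exact ⟨i, by rw [hi]; exact Finset.mem_singleton_self w⟩
    · obtain ⟨i, hi⟩ := exists_parts_eq s E d hd S N b hS hN hY
        ((mem_lst s E).mpr (Or.inr (Or.inl rfl)))
      exact ⟨i, by rw [hi]; exact hw⟩
    · obtain ⟨i, hi⟩ := exists_parts_eq s E d hd S N b hS hN hY
        ((mem_lst s E).mpr (Or.inr (Or.inr rfl)))
      exact ⟨i, by rw [hi]; exact hw⟩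

lemma mem_edges_mk (hd : 2 ≤ d) (S N : Finset (Fin n)) (b : ℕ) (hS : S.card = d - 2)
    (hN : N.Nonempty) (hY : (Yset s E S b N).Nonempty) {e : Finset (Fin n)} :
    e ∈ (mk s E d hd S N b hS hN hY).edges ↔
      ∃ u ∈ N, ∃ y ∈ Yset s E S b N, e = insert u (insert y S) := by
  constructor
  · intro he
    rw [DCuphSub.edges, Finset.mem_filter] at he
    obtain ⟨-, hsub, hcard⟩ := he
    have hcard' : ∀ p ∈ lst s E S N b, (e ∩ p).card = 1 := by
      intro p hp
      obtain ⟨i, hi⟩ := exists_parts_eq s E d hd S N b hS hN hY hp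
      rw [← hi]; exact hcard i
    have hNl : N ∈ lst s E S N b := (mem_lst s E).mpr (Or.inr (Or.inl rfl))
    have hYl : Yset s E S b N ∈ lst s E S N b := (mem_lst s E).mpr (Or.inr (Or.inr rfl))
    obtain ⟨u, hu⟩ := Finset.card_eq_one.mp (hcard' N hNl)
    obtain ⟨y, hy⟩ := Finset.card_eq_one.mp (hcard' (Yset s E S b N) hYl)
    have huN : u ∈ N := (Finset.mem_inter.mp (hu ▸ Finset.mem_singleton_self u)).2
    have hue : u ∈ e := (Finset.mem_inter.mp (hu ▸ Finset.mem_singleton_self u)).1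
    have hyY : y ∈ Yset s E S b N := (Finset.mem_inter.mp (hy ▸ Finset.mem_singleton_self y)).2
    have hye : y ∈ e := (Finset.mem_inter.mp (hy ▸ Finset.mem_singleton_self y)).1
    have hSe : ∀ x ∈ S, x ∈ e := by
      intro x hx
      have hxl : ({x} : Finset (Fin n)) ∈ lst s E S N b :=
        (mem_lst s E).mpr (Or.inl ⟨x, hx, rfl⟩)
      have h1 := hcard' _ hxl
      have hne : (e ∩ {x}).Nonempty := Finset.card_pos.mp (by omega)
      obtain ⟨z, hz⟩ := hne
      rcases Finset.mem_inter.mp hz with ⟨hze, hzx⟩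
      rwa [Finset.mem_singleton.mp hzx] at hze
    refine ⟨u, huN, y, hyY, ?_⟩
    apply Finset.Subset.antisymm
    · intro w hw
      have hwin := hsub hw
      rw [verts_mk, Finset.mem_union, Finset.mem_union] at hwin
      rcases hwin with (hwS | hwN) | hwY
      · exact Finset.mem_insert.mpr (Or.inr (Finset.mem_insert.mpr (Or.inr hwS)))
      · have : w ∈ e ∩ N := Finset.mem_inter.mpr ⟨hw, hwN⟩
        rw [hu, Finset.mem_singleton] at this
        subst this; exact Finset.mem_insert_self _ _
      · have : w ∈ e ∩ Yset s E S b N := Finset.mem_inter.mpr ⟨hw, hwY⟩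
        rw [hy, Finset.mem_singleton] at this
        subst this
        exact Finset.mem_insert.mpr (Or.inr (Finset.mem_insert_self _ _))
    · intro w hw
      rcases Finset.mem_insert.mp hw with rfl | hw'
      · exact hue
      rcases Finset.mem_insert.mp hw' with rfl | hw''
      · exact hye
      · exact hSe w hw''
  · rintro ⟨u, huN, y, hyY, rfl⟩
    have hucls : u ∈ cls s E S b y := by
      rw [(mem_Yset s E).mp hyY]; exact huN
    obtain ⟨hub, huy, hSu, hEu⟩ := (mem_cls s E).mp hucls
    have huS : u ∉ S := fun h => lt_irrefl u (hSu u h)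
    have hyS : y ∉ S := fun h => lt_irrefl y ((hSu y h).trans huy)
    have huy' : u ≠ y := ne_of_lt huy
    have hyN : y ∉ N := Finset.disjoint_right.mp (disj_NY s E) hyY
    have huY : u ∉ Yset s E S b N := Finset.disjoint_left.mp (disj_NY s E) huN
    rw [DCuphSub.edges, Finset.mem_filter]
    refine ⟨Finset.mem_univ _, ?_, ?_⟩
    · rw [verts_mk]
      intro w hw
      rcases Finset.mem_insert.mp hw with rfl | hw'
      · exact Finset.mem_union.mpr (Or.inl (Finset.mem_union.mpr (Or.inr huN)))
      rcases Finset.mem_insert.mp hw' with rfl | hw''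
      · exact Finset.mem_union.mpr (Or.inr hyY)
      · exact Finset.mem_union.mpr (Or.inl (Finset.mem_union.mpr (Or.inl hw'')))
    · intro i
      have hpl := parts_mem_lst s E d hd S N b hS hN hY i
      rw [mem_lst] at hpl
      rcases hpl with ⟨x, hxS, hx⟩ | h | h
      · rw [hx]
        have hxe : x ∈ insert u (insert y S) :=
          Finset.mem_insert.mpr (Or.inr (Finset.mem_insert.mpr (Or.inr hxS)))
        rw [Finset.inter_comm, Finset.singleton_inter_of_mem hxe]
        exact Finset.card_singleton x
      · rw [h]
        have : insert u (insert y S) ∩ N = {u} := by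
          ext w
          simp only [Finset.mem_inter, Finset.mem_insert, Finset.mem_singleton]
          constructor
          · rintro ⟨rfl | rfl | hwS, hwN⟩
            · rfl
            · exact absurd hwN hyN
            · exact absurd hwN (not_mem_N_of_mem_S s E hY hwS)
          · rintro rfl; exact ⟨Or.inl rfl, huN⟩
        rw [this]; exact Finset.card_singleton u
      · rw [h]
        have : insert u (insert y S) ∩ Yset s E S b N = {y} := by
          ext w
          simp only [Finset.mem_inter, Finset.mem_insert, Finset.mem_singleton]
          constructor
          · rintro ⟨rfl | rfl | hwS, hwY⟩
            · exact absurd hwY huY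
            · rfl
            · exact absurd hwY (not_mem_Y_of_mem_S s E hN hwS)
          · rintro rfl; exact ⟨Or.inr (Or.inl rfl), hyY⟩
        rw [this]; exact Finset.card_singleton y


/-- the index set of valid triples `(S, b, N)`. -/
def Idx : Finset (Finset (Fin n) × ℕ × Finset (Fin n)) :=
  ((univ.powersetCard (d - 2)) ×ˢ ((Finset.range n) ×ˢ univ.powerset)).filter
    fun x => x.2.2.Nonempty ∧ (Yset s E x.1 x.2.1 x.2.2).Nonempty

lemma mem_Idx {x : Finset (Fin n) × ℕ × Finset (Fin n)} :
    x ∈ Idx s E d ↔ x.1.card = d - 2 ∧ x.2.1 < n ∧ x.2.2.Nonempty ∧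
      (Yset s E x.1 x.2.1 x.2.2).Nonempty := by
  simp [Idx, Finset.mem_filter, Finset.mem_powersetCard_univ, Finset.mem_range, and_assoc]

/-- the cuph associated to an element of `Idx`. -/
def g (hd : 2 ≤ d) (x : {x // x ∈ Idx s E d}) : DCuphSub (Fin n) d E :=
  mk s E d hd x.1.1 x.1.2.2 x.1.2.1 ((mem_Idx s E d).mp x.2).1
    ((mem_Idx s E d).mp x.2).2.2.1 ((mem_Idx s E d).mp x.2).2.2.2

lemma mem_edges_g (hd : 2 ≤ d) (x : {x // x ∈ Idx s E d}) {e : Finset (Fin n)} :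
    e ∈ (g s E d hd x).edges ↔
      ∃ u ∈ x.1.2.2, ∃ y ∈ Yset s E x.1.1 x.1.2.1 x.1.2.2, e = insert u (insert y x.1.1) :=
  mem_edges_mk s E d hd _ _ _ _ _ _

lemma verts_g (hd : 2 ≤ d) (x : {x // x ∈ Idx s E d}) :
    (g s E d hd x).verts = x.1.1 ∪ x.1.2.2 ∪ Yset s E x.1.1 x.1.2.1 x.1.2.2 :=
  verts_mk s E d hd _ _ _ _ _ _

/-- existence and uniqueness of the covering cuph for an edge. -/
lemma cover (hd : 2 ≤ d) (hs : 1 ≤ s) (hE : ∀ e ∈ E, e.card = d)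
    {e : Finset (Fin n)} (he : e ∈ E) :
    ∃! x : {x // x ∈ Idx s E d}, e ∈ (g s E d hd x).edges := by
  have hecard : e.card = d := hE e he
  have hene : e.Nonempty := Finset.card_pos.mp (by omega)
  set y := e.max' hene with hy
  have hye : y ∈ e := e.max'_mem hene
  have hcard1 : (e.erase y).card = d - 1 := by rw [Finset.card_erase_of_mem hye, hecard]
  have hene1 : (e.erase y).Nonempty := Finset.card_pos.mp (by omega)
  set u := (e.erase y).max' hene1 with hu
  have hue' : u ∈ e.erase y := (e.erase y).max'_mem hene1
  have hue : u ∈ e := Finset.mem_of_mem_erase hue'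
  have huy : u < y := lt_of_le_of_ne (e.le_max' u hue) (Finset.ne_of_mem_erase hue')
  set S := (e.erase y).erase u with hSdef
  have hScard : S.card = d - 2 := by
    rw [hSdef, Finset.card_erase_of_mem hue', hcard1]
    omega
  have hSu : ∀ x ∈ S, x < u := by
    intro x hx
    exact lt_of_le_of_ne ((e.erase y).le_max' x (Finset.mem_of_mem_erase hx))
      (Finset.ne_of_mem_erase hx)
  have heq : insert u (insert y S) = e := by
    rw [Finset.insert_comm, hSdef, Finset.insert_erase hue', Finset.insert_erase hye]
  set b := (u : ℕ) / s with hb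
  set N := cls s E S b y with hN
  have huN : u ∈ N := by
    rw [hN, mem_cls]
    exact ⟨rfl, huy, hSu, by rw [heq]; exact he⟩
  have hyY : y ∈ Yset s E S b N := (mem_Yset s E).mpr rfl
  have hbn : b < n := lt_of_le_of_lt (Nat.div_le_self _ _) u.isLt
  have hIdx : (S, b, N) ∈ Idx s E d :=
    (mem_Idx s E d).mpr ⟨hScard, hbn, ⟨u, huN⟩, ⟨y, hyY⟩⟩
  refine ⟨⟨(S, b, N), hIdx⟩, ?_, ?_⟩
  · show e ∈ (g s E d hd ⟨(S, b, N), hIdx⟩).edges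
    rw [mem_edges_g]
    exact ⟨u, huN, y, hyY, heq.symm⟩
  · rintro ⟨⟨S', b', N'⟩, hIdx'⟩ hx'
    rw [mem_edges_g] at hx'
    obtain ⟨u', hu'N, y', hy'Y, he'⟩ := hx'
    simp only at hu'N hy'Y he'
    have hu'cls : u' ∈ cls s E S' b' y' := by
      rw [(mem_Yset s E).mp hy'Y]; exact hu'N
    obtain ⟨hu'b, hu'y, hS'u, -⟩ := (mem_cls s E).mp hu'cls
    -- y' is the max of e
    have hy'max : y' = y := by
      rw [hy]
      apply le_antisymm (e.le_max' y' (by rw [he']; simp))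
      apply Finset.max'_le
      intro w hw
      rw [he'] at hw
      rcases Finset.mem_insert.mp hw with rfl | hw'
      · exact hu'y.le
      rcases Finset.mem_insert.mp hw' with rfl | hw''
      · exact le_refl _
      · exact ((hS'u w hw'').trans hu'y).le
    subst hy'max
    have hu'S' : u' ∉ S' := fun h => lt_irrefl u' (hS'u u' h)
    have hy'S' : y ∉ S' := fun h => lt_irrefl y ((hS'u y h).trans hu'y)
    have hy'u' : y ≠ u' := (ne_of_lt hu'y).symm
    have herase : e.erase y = insert u' S' := by
      rw [he']
      ext w
      simp only [Finset.mem_erase, Finset.mem_insert]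
      constructor
      · rintro ⟨hwne, rfl | rfl | hwS⟩
        · exact Or.inl rfl
        · exact absurd rfl hwne
        · exact Or.inr hwS
      · rintro (rfl | hwS)
        · exact ⟨hy'u'.symm, Or.inl rfl⟩
        · exact ⟨fun h => hy'S' (h ▸ hwS), Or.inr (Or.inr hwS)⟩
    have hu'max : u' = u := by
      apply le_antisymm
      · apply Finset.le_max'
        exact herase ▸ Finset.mem_insert_self _ _
      · have hmem : u ∈ insert u' S' := herase ▸ hue'
        rcases Finset.mem_insert.mp hmem with rfl | hwS
        · exact le_refl _
        · exact (hS'u u hwS).le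
    subst hu'max
    have hS'eq : S' = S := by
      rw [hSdef, herase, Finset.erase_insert hu'S']
    have hb'eq : b' = b := by rw [← hu'b, hb]
    have hN'eq : N' = N := by
      rw [← (mem_Yset s E).mp hy'Y, hS'eq, hb'eq, hN]
    apply Subtype.ext
    simp only
    rw [hS'eq, hb'eq, hN'eq]


lemma card_Bblk_le (hs : 1 ≤ s) (b : ℕ) : (Bblk (n := n) s b).card ≤ s := by
  have : (Bblk (n := n) s b).card ≤ (Finset.range s).card := by
    refine Finset.card_le_card_of_injOn (fun u : Fin n => (u : ℕ) - b * s) ?_ ?_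
    · intro u hu
      rw [Finset.mem_coe, Bblk, Finset.mem_filter] at hu
      have hdiv : (u : ℕ) / s = b := hu.2
      have hdm := Nat.div_add_mod (u : ℕ) s
      have hmod : (u : ℕ) % s < s := Nat.mod_lt _ hs
      rw [hdiv, mul_comm s b] at hdm
      rw [Finset.mem_coe, Finset.mem_range]
      show (u : ℕ) - b * s < s
      omega
    · intro u hu w hw huw
      rw [Finset.mem_coe, Bblk, Finset.mem_filter] at hu hw
      have huw' : (u : ℕ) - b * s = (w : ℕ) - b * s := huw
      have hdm1 := Nat.div_add_mod (u : ℕ) s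
      have hdm2 := Nat.div_add_mod (w : ℕ) s
      have h1 : (u : ℕ) / s = b := hu.2
      have h2 : (w : ℕ) / s = b := hw.2
      rw [h1, mul_comm s b] at hdm1
      rw [h2, mul_comm s b] at hdm2
      exact Fin.ext (by omega)
  simpa using this

lemma cls_subset_Bblk {S : Finset (Fin n)} {b : ℕ} {y : Fin n} :
    cls s E S b y ⊆ Bblk s b := by
  intro u hu
  rw [mem_cls] at hu
  rw [Bblk, Finset.mem_filter]
  exact ⟨Finset.mem_univ _, hu.1⟩

lemma N_subset_Bblk {x : Finset (Fin n) × ℕ × Finset (Fin n)} (hx : x ∈ Idx s E d) :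
    x.2.2 ⊆ Bblk s x.2.1 := by
  obtain ⟨-, -, -, y, hy⟩ := (mem_Idx s E d).mp hx
  rw [mem_Yset] at hy
  rw [← hy]
  exact cls_subset_Bblk s E

lemma Sv_le (hd : 2 ≤ d) (v : Fin n) :
    ((univ.powersetCard (d - 2)).filter (fun S => v ∈ S)).card ≤ (d - 2) * n ^ (d - 3) := by
  rcases eq_or_lt_of_le hd with h2 | h3
  · have : ((univ.powersetCard (d - 2)).filter (fun S : Finset (Fin n) => v ∈ S)) = ∅ := by
      apply Finset.eq_empty_of_forall_notMem
      intro S hS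
      rw [Finset.mem_filter, Finset.mem_powersetCard_univ] at hS
      have : S.card = 0 := by omega
      rw [Finset.card_eq_zero] at this
      subst this
      exact absurd hS.2 (Finset.notMem_empty v)
    rw [this]
    simp
  · have h1 : ((univ.powersetCard (d - 2)).filter (fun S => v ∈ S)).card ≤
        ((univ.erase v).powersetCard (d - 3)).card := by
      apply Finset.card_le_card_of_injOn (fun S => S.erase v)
      · intro S hS
        rw [Finset.mem_coe, Finset.mem_filter, Finset.mem_powersetCard_univ] at hS
        rw [Finset.mem_coe, Finset.mem_powersetCard]
        constructor
        · intro w hw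
          rw [Finset.mem_erase] at hw ⊢
          exact ⟨hw.1, Finset.mem_univ _⟩
        · rw [Finset.card_erase_of_mem hS.2, hS.1]
          omega
      · intro S hS T hT hST
        rw [Finset.mem_coe, Finset.mem_filter] at hS hT
        rw [← Finset.insert_erase hS.2, ← Finset.insert_erase hT.2]
        exact congrArg (insert v) hST
    refine h1.trans ?_
    rw [Finset.card_powersetCard]
    have h2 : (univ.erase v).card.choose (d - 3) ≤ (univ.erase v).card ^ (d - 3) := by
      refine le_trans ?_ (Nat.descFactorial_le_pow _ _)
      rw [Nat.descFactorial_eq_factorial_mul_choose]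
      exact Nat.le_mul_of_pos_left _ (Nat.factorial_pos _)
    refine h2.trans ?_
    have h3 : (univ.erase v).card ≤ n := by
      refine le_trans (Finset.card_le_card (Finset.erase_subset _ _)) (by simp)
    calc (univ.erase v).card ^ (d - 3) ≤ n ^ (d - 3) := Nat.pow_le_pow_left h3 _
      _ ≤ (d - 2) * n ^ (d - 3) := Nat.le_mul_of_pos_left _ (by omega)

lemma choose_le_pow' (m k : ℕ) : m.choose k ≤ m ^ k := by
  refine le_trans ?_ (Nat.descFactorial_le_pow _ _)
  rw [Nat.descFactorial_eq_factorial_mul_choose]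
  exact Nat.le_mul_of_pos_left _ (Nat.factorial_pos _)

lemma load_le (hd : 2 ≤ d) (hs : 1 ≤ s) (v : Fin n) :
    ((Idx s E d).filter fun x => v ∈ x.1 ∪ x.2.2 ∪ Yset s E x.1 x.2.1 x.2.2).card ≤
      ((univ.powersetCard (d - 2)).filter (fun S => v ∈ S)).card * n * 2 ^ s
      + n.choose (d - 2) * 2 ^ s + n.choose (d - 2) * (n / s + 1) := by
  classical
  set A1 := (Idx s E d).filter (fun x => v ∈ x.1) with hA1
  set A2 := (Idx s E d).filter (fun x => v ∈ x.2.2) with hA2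
  set A3 := (Idx s E d).filter (fun x => v ∈ Yset s E x.1 x.2.1 x.2.2) with hA3
  have hsub : ((Idx s E d).filter fun x => v ∈ x.1 ∪ x.2.2 ∪ Yset s E x.1 x.2.1 x.2.2) ⊆
      A1 ∪ A2 ∪ A3 := by
    intro x hx
    rw [Finset.mem_filter] at hx
    obtain ⟨hxI, hxv⟩ := hx
    simp only [Finset.mem_union] at hxv ⊢
    rcases hxv with (h | h) | h
    · exact Or.inl (Or.inl (Finset.mem_filter.mpr ⟨hxI, h⟩))
    · exact Or.inl (Or.inr (Finset.mem_filter.mpr ⟨hxI, h⟩))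
    · exact Or.inr (Finset.mem_filter.mpr ⟨hxI, h⟩)
  refine (Finset.card_le_card hsub).trans ?_
  refine (Finset.card_union_le _ _).trans ?_
  refine (Nat.add_le_add_right (Finset.card_union_le _ _) _).trans ?_
  have hB1 : A1.card ≤
      ((univ.powersetCard (d - 2)).filter (fun S => v ∈ S)).card * n * 2 ^ s := by
    set T := ((univ.powersetCard (d - 2)).filter (fun S : Finset (Fin n) => v ∈ S)) ×ˢ
      Finset.range n with hT
    have hmap : ∀ x ∈ A1, (x.1, x.2.1) ∈ T := by
      intro x hx
      rw [hA1, Finset.mem_filter] at hx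
      obtain ⟨hxI, hxv⟩ := hx
      obtain ⟨hc, hb, -, -⟩ := (mem_Idx s E d).mp hxI
      rw [hT, Finset.mem_product, Finset.mem_filter, Finset.mem_powersetCard_univ,
        Finset.mem_range]
      exact ⟨⟨hc, hxv⟩, hb⟩
    rw [Finset.card_eq_sum_card_fiberwise hmap]
    have hfib : ∀ p ∈ T,
        (A1.filter (fun x => (x.1, x.2.1) = p)).card ≤ 2 ^ s := by
      intro p hp
      have : (A1.filter (fun x => (x.1, x.2.1) = p)).card ≤
          ((Bblk (n := n) s p.2).powerset).card := by
        apply Finset.card_le_card_of_injOn (fun x => x.2.2)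
        · intro x hx
          rw [Finset.mem_coe, Finset.mem_filter] at hx
          obtain ⟨hx1, hx2⟩ := hx
          rw [hA1, Finset.mem_filter] at hx1
          have hsubB := N_subset_Bblk s E d hx1.1
          rw [Finset.mem_coe, Finset.mem_powerset]
          have hb : x.2.1 = p.2 := (Prod.ext_iff.mp hx2).2
          rw [← hb]
          exact hsubB
        · intro x hx x' hx' hxx
          rw [Finset.mem_coe, Finset.mem_filter] at hx hx'
          have h1 : x.1 = p.1 := (Prod.ext_iff.mp hx.2).1
          have h1' : x'.1 = p.1 := (Prod.ext_iff.mp hx'.2).1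
          have h2 : x.2.1 = p.2 := (Prod.ext_iff.mp hx.2).2
          have h2' : x'.2.1 = p.2 := (Prod.ext_iff.mp hx'.2).2
          exact Prod.ext (h1.trans h1'.symm) (Prod.ext (h2.trans h2'.symm) hxx)
      refine this.trans ?_
      rw [Finset.card_powerset]
      exact Nat.pow_le_pow_right (by norm_num) (card_Bblk_le s hs p.2)
    calc ∑ p ∈ T, (A1.filter (fun x => (x.1, x.2.1) = p)).card
        ≤ T.card * 2 ^ s := by
          refine (Finset.sum_le_card_nsmul T _ _ hfib).trans ?_
          rw [smul_eq_mul]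
      _ = ((univ.powersetCard (d - 2)).filter (fun S => v ∈ S)).card * n * 2 ^ s := by
          rw [hT, Finset.card_product, Finset.card_range]
  have hB2 : A2.card ≤ n.choose (d - 2) * 2 ^ s := by
    have : A2 ⊆ (univ.powersetCard (d - 2)) ×ˢ
        ({(v : ℕ) / s} ×ˢ (Bblk (n := n) s ((v : ℕ) / s)).powerset) := by
      intro x hx
      rw [hA2, Finset.mem_filter] at hx
      obtain ⟨hxI, hxv⟩ := hx
      obtain ⟨hc, -, -, -⟩ := (mem_Idx s E d).mp hxI
      have hsubB := N_subset_Bblk s E d hxI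
      have hvB : v ∈ Bblk s x.2.1 := hsubB hxv
      rw [Bblk, Finset.mem_filter] at hvB
      have hbv : x.2.1 = (v : ℕ) / s := hvB.2.symm
      rw [Finset.mem_product, Finset.mem_product, Finset.mem_singleton,
        Finset.mem_powerset, Finset.mem_powersetCard_univ]
      exact ⟨hc, hbv, by rw [← hbv]; exact hsubB⟩
    refine (Finset.card_le_card this).trans ?_
    rw [Finset.card_product, Finset.card_product, Finset.card_singleton,
      Finset.card_powersetCard, Finset.card_powerset]
    have huniv : (univ : Finset (Fin n)).card = n := by simp
    rw [huniv, one_mul]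
    exact Nat.mul_le_mul (le_refl _)
      (Nat.pow_le_pow_right (by norm_num) (card_Bblk_le s hs _))
  have hB3 : A3.card ≤ n.choose (d - 2) * (n / s + 1) := by
    have : A3.card ≤ (((univ : Finset (Fin n)).powersetCard (d - 2)) ×ˢ Finset.range (n / s + 1)).card := by
      apply Finset.card_le_card_of_injOn (fun x => (x.1, x.2.1))
      · intro x hx
        rw [hA3, Finset.mem_coe, Finset.mem_filter] at hx
        obtain ⟨hxI, hxv⟩ := hx
        obtain ⟨hc, -, ⟨u, hu⟩, -⟩ := (mem_Idx s E d).mp hxI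
        have hsubB := N_subset_Bblk s E d hxI
        have huB : u ∈ Bblk s x.2.1 := hsubB hu
        rw [Bblk, Finset.mem_filter] at huB
        rw [Finset.mem_coe, Finset.mem_product, Finset.mem_powersetCard_univ, Finset.mem_range]
        refine ⟨hc, ?_⟩
        have : x.2.1 = (u : ℕ) / s := huB.2.symm
        show x.2.1 < n / s + 1
        rw [this]
        exact Nat.lt_succ_of_le (Nat.div_le_div_right u.isLt.le)
      · intro x hx x' hx' hxx
        rw [Finset.mem_coe, hA3, Finset.mem_filter] at hx hx'
        have hxx' : (x.1, x.2.1) = (x'.1, x'.2.1) := hxx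
        have h1 : x.1 = x'.1 := (Prod.ext_iff.mp hxx').1
        have h2 : x.2.1 = x'.2.1 := (Prod.ext_iff.mp hxx').2
        have hN : x.2.2 = cls s E x.1 x.2.1 v := ((mem_Yset s E).mp hx.2).symm
        have hN' : x'.2.2 = cls s E x'.1 x'.2.1 v := ((mem_Yset s E).mp hx'.2).symm
        refine Prod.ext h1 (Prod.ext h2 ?_)
        rw [hN, hN', h1, h2]
    refine this.trans ?_
    simp [Finset.card_powersetCard]
  omega


/-- the family of cuphs indexed by `Fin M`. -/
noncomputable def ffam (hd : 2 ≤ d) : Fin (Idx s E d).card → DCuphSub (Fin n) d E :=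
  fun i => g s E d hd ((Idx s E d).equivFin.symm i)

lemma ffam_cover (hd : 2 ≤ d) (hs : 1 ≤ s) (hE : ∀ e ∈ E, e.card = d)
    {e : Finset (Fin n)} (he : e ∈ E) :
    ∃! i, e ∈ (ffam s E d hd i).edges := by
  obtain ⟨x, hx, hun⟩ := cover s E d hd hs hE he
  refine ⟨(Idx s E d).equivFin x, ?_, ?_⟩
  · show e ∈ (g s E d hd ((Idx s E d).equivFin.symm ((Idx s E d).equivFin x))).edges
    rw [Equiv.symm_apply_apply]
    exact hx
  · intro j hj
    have hje := hun _ hj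
    rw [← hje, Equiv.apply_symm_apply]

lemma load_eq (hd : 2 ≤ d) (v : Fin n) :
    (univ.filter fun i => v ∈ (ffam s E d hd i).verts).card =
      ((Idx s E d).filter fun x => v ∈ x.1 ∪ x.2.2 ∪ Yset s E x.1 x.2.1 x.2.2).card := by
  apply Finset.card_bij (fun i _ => (((Idx s E d).equivFin.symm i) : Finset (Fin n) × ℕ × Finset (Fin n)))
  · intro i hi
    rw [Finset.mem_filter] at hi
    rw [Finset.mem_filter]
    refine ⟨((Idx s E d).equivFin.symm i).2, ?_⟩
    have := hi.2
    rw [ffam, verts_g] at this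
    exact this
  · intro i hi j hj hij
    have : (Idx s E d).equivFin.symm i = (Idx s E d).equivFin.symm j := Subtype.ext hij
    exact (Idx s E d).equivFin.symm.injective this
  · intro z hz
    rw [Finset.mem_filter] at hz
    refine ⟨(Idx s E d).equivFin ⟨z, hz.1⟩, ?_, ?_⟩
    · rw [Finset.mem_filter]
      refine ⟨Finset.mem_univ _, ?_⟩
      rw [ffam, verts_g, Equiv.symm_apply_apply]
      exact hz.2
    · rw [Equiv.symm_apply_apply]


lemma pow2s_bound (n L M2 s : ℕ) (hL : L = Nat.log 2 n) (hM2 : M2 = Nat.log 2 L)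
    (hs : s = L - 2 * M2) (h4M : 4 * M2 ≤ L) (hn : n ≠ 0) :
    2 ^ s * L ^ 2 ≤ 4 * n := by
  have hL2M : L < 2 ^ (M2 + 1) := hM2 ▸ Nat.lt_pow_succ_log_self (by norm_num) L
  have hlog := Nat.pow_log_le_self 2 hn
  rw [← hL] at hlog
  calc 2 ^ s * L ^ 2 ≤ 2 ^ s * (2 ^ (M2 + 1)) ^ 2 :=
        Nat.mul_le_mul_left _ (Nat.pow_le_pow_left hL2M.le 2)
    _ = 2 ^ (s + (M2 + 1) * 2) := by rw [← pow_mul, ← pow_add]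
    _ = 4 * 2 ^ L := by
        have hexp : s + (M2 + 1) * 2 = L + 2 := by omega
        rw [hexp, pow_add]
        ring
    _ ≤ 4 * n := by omega

set_option maxHeartbeats 2000000 in
lemma final_calc (d : ℕ) (hd : 2 ≤ d) (ε : ℝ) (hε : 0 < ε) (n : ℕ) (h2n : 2 ≤ n)
    (L M2 s : ℕ) (hL : L = Nat.log 2 n) (hM2 : M2 = Nat.log 2 L) (hs : s = L - 2 * M2)
    (hL2 : 2 ≤ L) (h4M : 4 * M2 ≤ L)
    (hC2 : (2 * (M2 : ℝ) + 1) ≤ ε / 8 * L)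
    (hC3 : ((L : ℝ) + 1) ≤ ε / 4 * n)
    (hC4 : (32 * (d : ℝ)) ≤ ε * L)
    (Sv : ℕ) (hSv : Sv ≤ (d - 2) * n ^ (d - 3)) :
    ((Sv * n * 2 ^ s + n.choose (d - 2) * 2 ^ s + n.choose (d - 2) * (n / s + 1) : ℕ) : ℝ) ≤
      (1 / (d - 2).factorial + ε) * n ^ (d - 1) / Real.logb 2 n := by
  have hn0 : (0:ℝ) < n := by positivity
  have hn1 : (1:ℝ) ≤ n := by exact_mod_cast Nat.one_le_iff_ne_zero.mpr (by omega)
  set ℓ := Real.logb 2 n with hℓ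
  have hℓ1 : 1 ≤ ℓ := by
    rw [hℓ, show (1:ℝ) = Real.logb 2 2 by simp]
    exact (Real.logb_le_logb one_lt_two (by norm_num) hn0).mpr (by exact_mod_cast h2n)
  have hℓ0 : 0 < ℓ := lt_of_lt_of_le one_pos hℓ1
  have hL0 : (0:ℝ) < L := by exact_mod_cast lt_of_lt_of_le zero_lt_two hL2
  have hLle : (L : ℝ) ≤ ℓ := by
    have h2L : (2:ℝ) ^ L ≤ n := by
      exact_mod_cast hL ▸ Nat.pow_log_le_self 2 (show n ≠ 0 by omega)
    calc (L : ℝ) = Real.logb 2 (2 ^ L) := by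
          rw [Real.logb_pow, Real.logb_self_eq_one one_lt_two]; ring
      _ ≤ ℓ := (Real.logb_le_logb one_lt_two (by positivity) hn0).mpr h2L
  have hℓle : ℓ ≤ (L:ℝ) + 1 := by
    have h2L : (n:ℝ) ≤ 2 ^ (L + 1) := by
      exact_mod_cast le_of_lt (hL ▸ Nat.lt_pow_succ_log_self (by norm_num) n)
    calc ℓ ≤ Real.logb 2 (2 ^ (L + 1)) :=
          (Real.logb_le_logb one_lt_two hn0 (by positivity)).mpr h2L
      _ = (L:ℝ) + 1 := by rw [Real.logb_pow, Real.logb_self_eq_one one_lt_two]; push_cast; ring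
  have hs1 : 1 ≤ s := by omega
  have hs0 : (0:ℝ) < s := by exact_mod_cast hs1
  have hsr : (s:ℝ) = (L:ℝ) - 2 * M2 := by
    rw [hs]
    push_cast [Nat.cast_sub (by omega : 2 * M2 ≤ L)]
    ring
  have hshalf : (L:ℝ) / 2 ≤ s := by
    have : 4 * (M2:ℝ) ≤ L := by exact_mod_cast h4M
    rw [hsr]; linarith
  have hsε : ((L:ℝ) + 1) ≤ (1 + ε / 4) * s := by
    have h1 : ε / 8 * L ≤ ε / 4 * s := by
      have := mul_le_mul_of_nonneg_left hshalf hε.le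
      linarith
    linarith [h1, hC2, hsr]
  have hℓs : ℓ ≤ (1 + ε / 4) * s := hℓle.trans hsε
  have hpow2s : (2:ℝ) ^ s * (L:ℝ) ^ 2 ≤ 4 * n := by
    exact_mod_cast pow2s_bound n L M2 s hL hM2 hs h4M (by omega)
  have h2s : (2:ℝ) ^ s ≤ 4 * n / (L:ℝ) ^ 2 := by
    rw [le_div_iff₀ (by positivity)]
    exact hpow2s
  have hC : (n.choose (d - 2) : ℝ) ≤ (n:ℝ) ^ (d - 2) / (d - 2).factorial := by
    rw [le_div_iff₀ (by positivity)]
    have h := Nat.descFactorial_le_pow n (d - 2)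
    have h2 := Nat.descFactorial_eq_factorial_mul_choose n (d - 2)
    have : (n.choose (d - 2)) * (d - 2).factorial ≤ n ^ (d - 2) := by
      rw [mul_comm, ← h2]; exact h
    exact_mod_cast this
  have hfac1 : (1:ℝ) ≤ (d - 2).factorial := by
    exact_mod_cast Nat.one_le_iff_ne_zero.mpr (Nat.factorial_ne_zero _)
  have hCpow : (n.choose (d - 2) : ℝ) ≤ (n:ℝ) ^ (d - 2) := by
    refine hC.trans ?_
    apply div_le_self (by positivity) hfac1
  have hP : (0:ℝ) ≤ (n:ℝ) ^ (d - 1) := by positivity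
  have hL2r : (2:ℝ) ≤ L := by exact_mod_cast hL2
  have hℓ2L : ℓ ≤ 2 * L := by linarith
  -- Term 1
  have hT1 : (Sv : ℝ) * n * 2 ^ s ≤ ε / 4 * (n:ℝ) ^ (d - 1) / ℓ := by
    rcases Nat.lt_or_ge d 3 with hd3 | hd3
    · have hd2 : d = 2 := by omega
      have hSv0 : Sv = 0 := by
        have h := hSv
        rw [hd2] at h
        simpa using h
      rw [hSv0]
      push_cast
      rw [zero_mul, zero_mul]
      positivity
    · have hSvr : (Sv : ℝ) ≤ ((d:ℝ) - 2) * (n:ℝ) ^ (d - 3) := by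
        calc (Sv : ℝ) ≤ (((d - 2) * n ^ (d - 3) : ℕ) : ℝ) := by exact_mod_cast hSv
          _ = ((d:ℝ) - 2) * (n:ℝ) ^ (d - 3) := by push_cast [Nat.cast_sub hd]; ring
      have hd2r : (0:ℝ) ≤ (d:ℝ) - 2 := by
        have : (2:ℝ) ≤ d := by exact_mod_cast hd
        linarith
      have step1 : (Sv : ℝ) * n * 2 ^ s ≤ ((d:ℝ) - 2) * (n:ℝ) ^ (d - 3) * n * (4 * n / L ^ 2) := by
        have h1 : (Sv : ℝ) * n ≤ ((d:ℝ) - 2) * (n:ℝ) ^ (d - 3) * n :=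
          mul_le_mul_of_nonneg_right hSvr (le_of_lt hn0)
        apply mul_le_mul h1 h2s (by positivity) (by positivity)
      have hnp : (n:ℝ) ^ (d - 3) * n * n = (n:ℝ) ^ (d - 1) := by
        rw [← pow_succ, ← pow_succ]
        congr 1
        omega
      have hpoweq : ((d:ℝ) - 2) * (n:ℝ) ^ (d - 3) * n * (4 * n / L ^ 2) =
          4 * ((d:ℝ) - 2) * (n:ℝ) ^ (d - 1) / L ^ 2 := by
        calc ((d:ℝ) - 2) * (n:ℝ) ^ (d - 3) * n * (4 * n / L ^ 2)
            = 4 * ((d:ℝ) - 2) * ((n:ℝ) ^ (d - 3) * n * n) / L ^ 2 := by ring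
          _ = 4 * ((d:ℝ) - 2) * (n:ℝ) ^ (d - 1) / L ^ 2 := by rw [hnp]
      rw [hpoweq] at step1
      refine step1.trans ?_
      rw [div_le_div_iff₀ (by positivity) hℓ0]
      have hkey : 32 * ((d:ℝ) - 2) ≤ ε * L := by linarith [hC4]
      have hstep : 4 * ((d:ℝ) - 2) * ℓ ≤ ε / 4 * L ^ 2 := by
        have p1 : ((d:ℝ) - 2) * ℓ ≤ ((d:ℝ) - 2) * (2 * L) :=
          mul_le_mul_of_nonneg_left hℓ2L hd2r
        have p2 : (32 * ((d:ℝ) - 2)) * L ≤ (ε * L) * L :=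
          mul_le_mul_of_nonneg_right hkey hL0.le
        nlinarith [p1, p2]
      calc 4 * ((d:ℝ) - 2) * (n:ℝ) ^ (d - 1) * ℓ
          = (4 * ((d:ℝ) - 2) * ℓ) * (n:ℝ) ^ (d - 1) := by ring
        _ ≤ (ε / 4 * L ^ 2) * (n:ℝ) ^ (d - 1) := mul_le_mul_of_nonneg_right hstep hP
        _ = ε / 4 * (n:ℝ) ^ (d - 1) * L ^ 2 := by ring
  -- Term 2
  have hT2 : (n.choose (d - 2) : ℝ) * 2 ^ s ≤ ε / 4 * (n:ℝ) ^ (d - 1) / ℓ := by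
    have step1 : (n.choose (d - 2) : ℝ) * 2 ^ s ≤ (n:ℝ) ^ (d - 2) * (4 * n / L ^ 2) :=
      mul_le_mul hCpow h2s (by positivity) (by positivity)
    have hnp : (n:ℝ) ^ (d - 2) * n = (n:ℝ) ^ (d - 1) := by
      rw [← pow_succ]
      congr 1
      omega
    have hpoweq : (n:ℝ) ^ (d - 2) * (4 * n / L ^ 2) = 4 * (n:ℝ) ^ (d - 1) / L ^ 2 := by
      calc (n:ℝ) ^ (d - 2) * (4 * n / L ^ 2) = 4 * ((n:ℝ) ^ (d - 2) * n) / L ^ 2 := by ring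
        _ = 4 * (n:ℝ) ^ (d - 1) / L ^ 2 := by rw [hnp]
    rw [hpoweq] at step1
    refine step1.trans ?_
    rw [div_le_div_iff₀ (by positivity) hℓ0]
    have h32 : (32:ℝ) ≤ ε * L := by
      have hd1 : (1:ℝ) ≤ d := by exact_mod_cast le_trans one_le_two hd
      linarith [hC4]
    have hstep : 4 * ℓ ≤ ε / 4 * L ^ 2 := by
      have p2 : (32:ℝ) * L ≤ (ε * L) * L := mul_le_mul_of_nonneg_right h32 hL0.le
      nlinarith [p2]
    calc 4 * (n:ℝ) ^ (d - 1) * ℓ = (4 * ℓ) * (n:ℝ) ^ (d - 1) := by ring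
      _ ≤ (ε / 4 * L ^ 2) * (n:ℝ) ^ (d - 1) := mul_le_mul_of_nonneg_right hstep hP
      _ = ε / 4 * (n:ℝ) ^ (d - 1) * L ^ 2 := by ring
  -- Term 3
  have hT3 : (n.choose (d - 2) : ℝ) * (((n / s : ℕ) : ℝ) + 1) ≤
      (1 / (d - 2).factorial + ε / 2) * (n:ℝ) ^ (d - 1) / ℓ := by
    have hndiv : ((n / s : ℕ) : ℝ) + 1 ≤ (n:ℝ) / s + 1 := by
      have := Nat.cast_div_le (α := ℝ) (m := n) (n := s)
      linarith
    have hkey : ((n:ℝ) / s + 1) * ℓ ≤ (1 + ε / 2) * n := by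
      have h1 : (n:ℝ) / s * ℓ ≤ (1 + ε / 4) * n := by
        rw [div_mul_eq_mul_div, div_le_iff₀ hs0]
        calc (n:ℝ) * ℓ ≤ n * ((1 + ε / 4) * s) :=
              mul_le_mul_of_nonneg_left hℓs (le_of_lt hn0)
          _ = (1 + ε / 4) * n * s := by ring
      have h2 : ℓ ≤ ε / 4 * n := le_trans hℓle hC3
      nlinarith [h1, h2]
    have step1 : (n.choose (d - 2) : ℝ) * (((n / s : ℕ) : ℝ) + 1) ≤
        ((n:ℝ) ^ (d - 2) / (d - 2).factorial) * ((n:ℝ) / s + 1) := by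
      apply mul_le_mul hC hndiv (by positivity) (by positivity)
    refine step1.trans ?_
    have hkey2 : (n:ℝ) / s + 1 ≤ (1 + ε / 2) * n / ℓ := by
      rw [le_div_iff₀ hℓ0]
      exact hkey
    have hnp : (n:ℝ) ^ (d - 2) * n = (n:ℝ) ^ (d - 1) := by
      rw [← pow_succ]
      congr 1
      omega
    have hcoef : (1 + ε / 2) / ((d - 2).factorial : ℝ) ≤ 1 / (d - 2).factorial + ε / 2 := by
      rw [add_div]
      have : ε / 2 / ((d - 2).factorial : ℝ) ≤ ε / 2 := div_le_self (by positivity) hfac1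
      linarith
    calc ((n:ℝ) ^ (d - 2) / (d - 2).factorial) * ((n:ℝ) / s + 1)
        ≤ ((n:ℝ) ^ (d - 2) / (d - 2).factorial) * ((1 + ε / 2) * n / ℓ) :=
          mul_le_mul_of_nonneg_left hkey2 (by positivity)
      _ = ((1 + ε / 2) / ((d - 2).factorial : ℝ)) * ((n:ℝ) ^ (d - 2) * n) / ℓ := by ring
      _ = ((1 + ε / 2) / ((d - 2).factorial : ℝ)) * (n:ℝ) ^ (d - 1) / ℓ := by rw [hnp]
      _ ≤ (1 / (d - 2).factorial + ε / 2) * (n:ℝ) ^ (d - 1) / ℓ := by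
          exact div_le_div_of_nonneg_right (mul_le_mul_of_nonneg_right hcoef hP) hℓ0.le
  have hsum : ε / 4 * (n:ℝ) ^ (d - 1) / ℓ + ε / 4 * (n:ℝ) ^ (d - 1) / ℓ +
      (1 / (d - 2).factorial + ε / 2) * (n:ℝ) ^ (d - 1) / ℓ =
      (1 / (d - 2).factorial + ε) * (n:ℝ) ^ (d - 1) / ℓ := by ring
  push_cast
  linarith [hT1, hT2, hT3, hsum]


lemma natlog_le_logb (m : ℕ) (hm : 1 ≤ m) : (Nat.log 2 m : ℝ) ≤ Real.logb 2 m := by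
  have hm0 : (0:ℝ) < m := by exact_mod_cast hm
  have h2L : (2:ℝ) ^ (Nat.log 2 m) ≤ m := by
    exact_mod_cast Nat.pow_log_le_self 2 (by omega)
  calc (Nat.log 2 m : ℝ) = Real.logb 2 (2 ^ Nat.log 2 m) := by
        rw [Real.logb_pow, Real.logb_self_eq_one one_lt_two]; ring
    _ ≤ Real.logb 2 m := (Real.logb_le_logb one_lt_two (by positivity) hm0).mpr h2L

lemma tendsto_natlog : Filter.Tendsto (fun n : ℕ => Nat.log 2 n) Filter.atTop Filter.atTop := by
  refine Filter.tendsto_atTop.mpr fun K => Filter.eventually_atTop.mpr ⟨2 ^ K, fun n hn => ?_⟩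
  have h1 : 1 ≤ 2 ^ K := Nat.one_le_two_pow
  exact (Nat.le_log_iff_pow_le (by norm_num) (by omega)).mpr hn

lemma tendsto_natlog_div : Filter.Tendsto (fun m : ℕ => (Nat.log 2 m : ℝ) / m)
    Filter.atTop (nhds 0) := by
  have hlog : Filter.Tendsto (fun x : ℝ => Real.log x / x) Filter.atTop (nhds 0) :=
    Real.isLittleO_log_id_atTop.tendsto_div_nhds_zero
  have hlogn : Filter.Tendsto (fun m : ℕ => Real.log m / m) Filter.atTop (nhds 0) :=
    hlog.comp tendsto_natCast_atTop_atTop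
  have hg : Filter.Tendsto (fun m : ℕ => (1 / Real.log 2) * (Real.log m / m))
      Filter.atTop (nhds 0) := by
    have := hlogn.const_mul (1 / Real.log 2)
    rwa [mul_zero] at this
  apply squeeze_zero' ?_ ?_ hg
  · filter_upwards [Filter.eventually_ge_atTop 1] with m hm
    positivity
  · filter_upwards [Filter.eventually_ge_atTop 1] with m hm
    have hm0 : (0:ℝ) < m := by exact_mod_cast hm
    have h1 := natlog_le_logb m hm
    rw [Real.logb] at h1
    calc (Nat.log 2 m : ℝ) / m ≤ Real.log m / Real.log 2 / m :=
          div_le_div_of_nonneg_right h1 hm0.le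
      _ = 1 / Real.log 2 * (Real.log m / m) := by ring

lemma eventually_good (d : ℕ) (ε : ℝ) (hε : 0 < ε) :
    ∀ᶠ n : ℕ in Filter.atTop, 2 ≤ n ∧ 2 ≤ Nat.log 2 n ∧
      4 * Nat.log 2 (Nat.log 2 n) ≤ Nat.log 2 n ∧
      (2 * (Nat.log 2 (Nat.log 2 n) : ℝ) + 1) ≤ ε / 8 * (Nat.log 2 n) ∧
      ((Nat.log 2 n : ℝ) + 1) ≤ ε / 4 * n ∧ (32 * (d : ℝ)) ≤ ε * (Nat.log 2 n) := by
  have hA : ∀ᶠ n : ℕ in Filter.atTop, 2 ≤ n := Filter.eventually_ge_atTop 2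
  have hB : ∀ᶠ n : ℕ in Filter.atTop, 2 ≤ Nat.log 2 n :=
    tendsto_natlog.eventually_ge_atTop 2
  -- condition on M2 versus L, stated for L, then composed
  have hD0 : ∀ᶠ L : ℕ in Filter.atTop,
      4 * Nat.log 2 L ≤ L ∧ (2 * (Nat.log 2 L : ℝ) + 1) ≤ ε / 8 * L := by
    set c : ℝ := min (1 / 8) (ε / 64) with hc
    have hc0 : (0:ℝ) < c := by
      rw [hc]; exact lt_min (by norm_num) (by positivity)
    have h1 : ∀ᶠ L : ℕ in Filter.atTop, (Nat.log 2 L : ℝ) / L < c :=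
      tendsto_natlog_div.eventually (gt_mem_nhds hc0)
    have h2 : ∀ᶠ L : ℕ in Filter.atTop, (16:ℝ) / ε ≤ L :=
      tendsto_natCast_atTop_atTop.eventually_ge_atTop _
    have h3 : ∀ᶠ L : ℕ in Filter.atTop, 1 ≤ L := Filter.eventually_ge_atTop 1
    filter_upwards [h1, h2, h3] with L ha hb hc3
    have hL0 : (0:ℝ) < L := by exact_mod_cast hc3
    have hM2 : (Nat.log 2 L : ℝ) < c * L := by
      rwa [div_lt_iff₀ hL0] at ha
    have hc18 : c ≤ 1 / 8 := min_le_left _ _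
    have hc64 : c ≤ ε / 64 := min_le_right _ _
    constructor
    · have : (4 * Nat.log 2 L : ℝ) < L := by
        have := mul_le_mul_of_nonneg_right hc18 hL0.le
        push_cast
        nlinarith
      have : 4 * Nat.log 2 L < L := by exact_mod_cast this
      omega
    · have h16 : (1:ℝ) ≤ ε / 16 * L := by
        rw [div_mul_eq_mul_div, le_div_iff₀ (by norm_num)]
        calc (1:ℝ) * 16 = 16 := by ring
          _ = ε * (16 / ε) := by field_simp
          _ ≤ ε * L := mul_le_mul_of_nonneg_left hb hε.le
      have hM2' : 2 * (Nat.log 2 L : ℝ) < ε / 32 * L := by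
        have := mul_le_mul_of_nonneg_right hc64 hL0.le
        nlinarith
      linarith
  have hD : ∀ᶠ n : ℕ in Filter.atTop,
      4 * Nat.log 2 (Nat.log 2 n) ≤ Nat.log 2 n ∧
      (2 * (Nat.log 2 (Nat.log 2 n) : ℝ) + 1) ≤ ε / 8 * (Nat.log 2 n) :=
    tendsto_natlog.eventually hD0
  have hE : ∀ᶠ n : ℕ in Filter.atTop, ((Nat.log 2 n : ℝ) + 1) ≤ ε / 4 * n := by
    have hlog : Filter.Tendsto (fun x : ℝ => Real.log x / x) Filter.atTop (nhds 0) :=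
      Real.isLittleO_log_id_atTop.tendsto_div_nhds_zero
    have hlogn : Filter.Tendsto (fun m : ℕ => Real.log m / m) Filter.atTop (nhds 0) :=
      hlog.comp tendsto_natCast_atTop_atTop
    have hl2 : (0:ℝ) < Real.log 2 := Real.log_pos one_lt_two
    have h1 : ∀ᶠ n : ℕ in Filter.atTop, Real.log n / n < ε / 8 * Real.log 2 :=
      hlogn.eventually (gt_mem_nhds (by positivity))
    have h2 : ∀ᶠ n : ℕ in Filter.atTop, (8:ℝ) / ε ≤ n :=
      tendsto_natCast_atTop_atTop.eventually_ge_atTop _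
    have h3 : ∀ᶠ n : ℕ in Filter.atTop, 1 ≤ n := Filter.eventually_ge_atTop 1
    filter_upwards [h1, h2, h3] with n ha hb hc
    have hn0 : (0:ℝ) < n := by exact_mod_cast hc
    have hlb := natlog_le_logb n hc
    rw [Real.logb] at hlb
    have hstep : Real.log n / Real.log 2 ≤ ε / 8 * n := by
      rw [div_le_iff₀ hl2]
      have : Real.log n < ε / 8 * Real.log 2 * n := by
        rw [div_lt_iff₀ hn0] at ha
        linarith
      linarith
    have h8 : (1:ℝ) ≤ ε / 8 * n := by
      rw [div_mul_eq_mul_div, le_div_iff₀ (by norm_num)]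
      calc (1:ℝ) * 8 = 8 := by ring
        _ = ε * (8 / ε) := by field_simp
        _ ≤ ε * n := mul_le_mul_of_nonneg_left hb hε.le
    linarith
  have hF : ∀ᶠ n : ℕ in Filter.atTop, (32 * (d : ℝ)) ≤ ε * (Nat.log 2 n) := by
    have h1 : ∀ᶠ L : ℕ in Filter.atTop, 32 * (d:ℝ) / ε ≤ L :=
      tendsto_natCast_atTop_atTop.eventually_ge_atTop _
    have h2 := tendsto_natlog.eventually h1
    filter_upwards [h2] with n hn
    rw [div_le_iff₀ hε] at hn
    linarith
  filter_upwards [hA, hB, hD, hE, hF] with n h1 h2 h3 h4 h5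
  exact ⟨h1, h2, h3.1, h3.2, h4, h5⟩

end EPaux

/-- **Erdős–Pyber theorem for `d`-uniform hypergraphs, integer version.** -/
theorem erdos_pyber_hypergraph_integer (d : ℕ) (hd : 2 ≤ d) :
    ∀ ε : ℝ, 0 < ε → ∃ N : ℕ, ∀ n : ℕ, N ≤ n →
      ∀ E : Finset (Finset (Fin n)), (∀ e ∈ E, e.card = d) →
        ∃ (M : ℕ) (f : Fin M → DCuphSub (Fin n) d E),
          (∀ e ∈ E, ∃! i : Fin M, e ∈ (f i).edges) ∧
          ∀ v : Fin n,
            ((Finset.univ.filter fun i : Fin M => v ∈ (f i).verts).card : ℝ) ≤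
              (1 / (d - 2).factorial + ε) * n ^ (d - 1) / Real.logb 2 n := by
  intro ε hε
  obtain ⟨N, hN⟩ := Filter.eventually_atTop.mp (EPaux.eventually_good d ε hε)
  refine ⟨N, fun n hn E hE => ?_⟩
  obtain ⟨h2n, hL2, h4M, hC2, hC3, hC4⟩ := hN n hn
  set L := Nat.log 2 n with hL
  set M2 := Nat.log 2 L with hM2
  set s := L - 2 * M2 with hs
  have hs1 : 1 ≤ s := by omega
  refine ⟨(EPaux.Idx s E d).card, EPaux.ffam s E d hd,
    fun e he => EPaux.ffam_cover s E d hd hs1 hE he, ?_⟩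
  intro v
  rw [EPaux.load_eq]
  have h1 := EPaux.load_le s E d hd hs1 v
  have h2 := EPaux.Sv_le d hd v
  calc ((((EPaux.Idx s E d).filter fun x =>
        v ∈ x.1 ∪ x.2.2 ∪ EPaux.Yset s E x.1 x.2.1 x.2.2).card : ℕ) : ℝ)
      ≤ ((((Finset.univ.powersetCard (d - 2)).filter (fun S => v ∈ S)).card * n * 2 ^ s
          + n.choose (d - 2) * 2 ^ s + n.choose (d - 2) * (n / s + 1) : ℕ) : ℝ) := by
        exact_mod_cast h1
    _ ≤ (1 / (d - 2).factorial + ε) * n ^ (d - 1) / Real.logb 2 n :=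
        EPaux.final_calc d hd ε hε n h2n L M2 s hL hM2 hs hL2 h4M hC2 hC3 hC4 _ h2
end

section
/- For every ε > 0 there exists M such that for every m ≥ M, every n, and every finite simple graph G on n vertices in which every vertex has degree at least n − m, the fractional vertex CB-cover number satisfies vc*_CB(G) ≤ (0.722 + ε)·m/log₂ m. -/
set_option maxHeartbeats 1000000

open Finset

namespace DGaux

lemma card_filter_val_lt {N k : ℕ} (hk : k ≤ N) :
    #(univ.filter (fun c : Fin N => c.val < k)) = k := by
  rw [← Finset.card_range k]
  apply Finset.card_bij (fun (a : Fin N) _ => a.val)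
  · intro a ha; simp only [mem_filter, mem_univ, true_and] at ha; simpa using ha
  · intro a _ b _ hab; exact Fin.ext hab
  · intro b hb
    simp only [Finset.mem_range] at hb
    exact ⟨⟨b, lt_of_lt_of_le hb hk⟩, by simp [hb], rfl⟩

lemma card_filter_le_val {N k : ℕ} (hk : k ≤ N) :
    #(univ.filter (fun c : Fin N => k ≤ c.val)) = N - k := by
  have h1 := Finset.card_filter_add_card_filter_not
    (s := (univ : Finset (Fin N))) (p := fun c : Fin N => c.val < k)
  have h2 : #(univ.filter (fun c : Fin N => ¬ c.val < k)) =
      #(univ.filter (fun c : Fin N => k ≤ c.val)) := by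
    congr 1; ext c; simp [Nat.not_lt]
  have h3 := card_filter_val_lt hk
  simp only [card_univ, Fintype.card_fin] at h1
  omega

lemma prod_ite_const {α : Type*} (T : Finset α) (P : α → Prop) [DecidablePred P] (a b : ℕ) :
    ∏ x ∈ T, (if P x then a else b) =
      a ^ #(T.filter P) * b ^ #(T.filter (fun x => ¬ P x)) := by
  rw [← Finset.prod_filter_mul_prod_filter_not T P]
  rw [Finset.prod_congr rfl (fun x hx => if_pos (Finset.mem_filter.mp hx).2),
      Finset.prod_congr rfl (fun x hx => if_neg (Finset.mem_filter.mp hx).2),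
      Finset.prod_const, Finset.prod_const]

section Graph

variable {n : ℕ} (G : SimpleGraph (Fin n)) [DecidableRel G.Adj] (m p : ℕ)

/-- number of "phantom" coordinates -/
def phtm (v : Fin n) : ℕ := G.degree v + m - n

/-- non-neighbors (other than itself): neighbors in the complement graph -/
def Hnbr (v : Fin n) : Finset (Fin n) := univ.filter (fun w => w ≠ v ∧ ¬ G.Adj v w)

lemma card_Hnbr (v : Fin n) : #(Hnbr G v) = n - 1 - G.degree v := by
  have h : Hnbr G v = univ \ insert v (G.neighborFinset v) := by
    ext w
    simp only [Hnbr, mem_filter, mem_univ, true_and, mem_sdiff, mem_insert,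
      SimpleGraph.mem_neighborFinset]
    tauto
  rw [h, Finset.card_sdiff_of_subset (Finset.subset_univ _), Finset.card_univ, Fintype.card_fin,
    Finset.card_insert_of_notMem (by simp), SimpleGraph.card_neighborFinset_eq_degree]
  omega

/-- the event that `v` is on the `A`-side -/
abbrev inA (ω : Fin n → Fin (m ^ m)) (v : Fin n) : Prop := (ω v).val < p * m ^ (m - 1)

/-- threshold for membership on the `B` side -/
def bTh (v : Fin n) : ℕ := m ^ m - (m - p) ^ (1 + phtm G m v) * m ^ (m - 1 - phtm G m v)

/-- the event that `v` is on the `B`-side -/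
abbrev inB (ω : Fin n → Fin (m ^ m)) (v : Fin n) : Prop :=
  bTh G m p v ≤ (ω v).val ∧ ∀ w : Fin n, ¬ G.Adj v w → w ≠ v → ¬ inA m p ω w

abbrev validCB (ω : Fin n → Fin (m ^ m)) : Prop :=
  (univ.filter (inA m p ω)).Nonempty ∧ (univ.filter (inB G m p ω)).Nonempty

end Graph

section Arith

variable {n : ℕ} (G : SimpleGraph (Fin n)) [DecidableRel G.Adj] {m p : ℕ}

lemma phtm_add (hp1 : 1 ≤ p) (hpm : p ≤ m) (hdeg : ∀ v : Fin n, n ≤ G.degree v + m)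
    (v : Fin n) : phtm G m v + (n - 1 - G.degree v) + 1 = m := by
  have h1 : G.degree v < n := by
    have := G.degree_lt_card_verts v
    simpa using this
  have h2 := hdeg v
  unfold phtm
  omega

lemma bTh_ge (hp1 : 1 ≤ p) (hpm : p ≤ m) (hdeg : ∀ v : Fin n, n ≤ G.degree v + m)
    (v : Fin n) : p * m ^ (m - 1) ≤ bTh G m p v := by
  have hph := phtm_add G hp1 hpm hdeg v
  set a := phtm G m v with ha
  have h1 : (m - p) ^ (1 + a) * m ^ (m - 1 - a) ≤ (m - p) * m ^ (m - 1) := by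
    have e1 : (m - p) ^ (1 + a) = (m - p) * (m - p) ^ a := by
      rw [pow_add, pow_one]
    rw [e1, mul_assoc]
    apply Nat.mul_le_mul_left
    calc (m - p) ^ a * m ^ (m - 1 - a) ≤ m ^ a * m ^ (m - 1 - a) := by
          apply Nat.mul_le_mul_right
          exact Nat.pow_le_pow_left (Nat.sub_le m p) a
      _ = m ^ (m - 1) := by rw [← pow_add]; congr 1; omega
  have hm1 : 1 ≤ m := le_trans hp1 hpm
  have h2 : m ^ m = p * m ^ (m - 1) + (m - p) * m ^ (m - 1) := by
    have e : m ^ m = m ^ (m - 1) * m := by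
      conv_lhs => rw [show m ^ m = m ^ ((m - 1) + 1) by rw [Nat.sub_add_cancel hm1]]
      rw [pow_succ]
    rw [e, ← Nat.add_mul, Nat.add_sub_cancel' hpm, Nat.mul_comm]
  unfold bTh
  rw [← ha]
  omega

lemma inB_not_inA (hp1 : 1 ≤ p) (hpm : p ≤ m) (hdeg : ∀ v : Fin n, n ≤ G.degree v + m)
    {ω : Fin n → Fin (m ^ m)} {v : Fin n} (h : inB G m p ω v) : ¬ inA m p ω v := by
  have := bTh_ge G hp1 hpm hdeg v
  simp only [inA, not_lt]
  exact le_trans this h.1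

end Arith


section Events

variable {n : ℕ} (G : SimpleGraph (Fin n)) [DecidableRel G.Adj] (m p : ℕ)

/-- the `B`-side low threshold set of coordinate values -/
def LOWc : Finset (Fin (m ^ m)) := univ.filter (fun c => c.val < p * m ^ (m - 1))

def NAc : Finset (Fin (m ^ m)) := univ.filter (fun c => p * m ^ (m - 1) ≤ c.val)

def HIBc (v : Fin n) : Finset (Fin (m ^ m)) := univ.filter (fun c => bTh G m p v ≤ c.val)

/-- the event that edge `(u, v)` is covered with `v` on the `A` side, `u` on the `B` side -/
def CEv (u v : Fin n) : Finset (Fin n → Fin (m ^ m)) :=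
  Fintype.piFinset fun x =>
    if x = v then LOWc m p else if x = u then HIBc G m p u else
    if ¬ G.Adj u x then NAc m p else univ

/-- superset of the event that `v` is on the `A` side -/
def AEv (v : Fin n) : Finset (Fin n → Fin (m ^ m)) :=
  Fintype.piFinset fun x => if x = v then LOWc m p else univ

/-- superset of the event that `v` is on the `B` side -/
def BEv (v : Fin n) : Finset (Fin n → Fin (m ^ m)) :=
  Fintype.piFinset fun x =>
    if x = v then HIBc G m p v else if ¬ G.Adj v x then NAc m p else univ

variable {G m p}

lemma mem_CEv {u v : Fin n} (huv : G.Adj u v) {ω : Fin n → Fin (m ^ m)}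
    (hω : ω ∈ CEv G m p u v) : inA m p ω v ∧ inB G m p ω u := by
  rw [CEv, Fintype.mem_piFinset] at hω
  have hne : u ≠ v := huv.ne
  constructor
  · have h := hω v
    rw [if_pos rfl] at h
    simpa [LOWc] using h
  · constructor
    · have h := hω u
      rw [if_neg hne, if_pos rfl] at h
      simpa [HIBc] using h
    · intro w hadj hwu
      have hwv : w ≠ v := by rintro rfl; exact hadj huv
      have h := hω w
      rw [if_neg hwv, if_neg hwu, if_pos hadj] at h
      simp only [NAc, mem_filter, mem_univ, true_and] at h
      simpa [inA] using Nat.not_lt.mpr h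

lemma mem_AEv_of_inA {v : Fin n} {ω : Fin n → Fin (m ^ m)} (h : inA m p ω v) :
    ω ∈ AEv m p v := by
  rw [AEv, Fintype.mem_piFinset]
  intro x
  by_cases hx : x = v
  · subst hx; rw [if_pos rfl]; simpa [LOWc] using h
  · rw [if_neg hx]; exact mem_univ _

lemma mem_BEv_of_inB {v : Fin n} {ω : Fin n → Fin (m ^ m)} (h : inB G m p ω v) :
    ω ∈ BEv G m p v := by
  rw [BEv, Fintype.mem_piFinset]
  intro x
  by_cases hx : x = v
  · subst hx; rw [if_pos rfl]; simpa [HIBc] using h.1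
  · rw [if_neg hx]
    by_cases hadj : ¬ G.Adj v x
    · rw [if_pos hadj]
      have := h.2 x hadj hx
      simp only [NAc, mem_filter, mem_univ, true_and]
      simpa [inA, Nat.not_lt] using this
    · rw [if_neg hadj]; exact mem_univ _

end Events

section Cards

variable {n : ℕ} (G : SimpleGraph (Fin n)) [DecidableRel G.Adj] {m p : ℕ}

lemma card_LOWc (hpm : p ≤ m) (hm1 : 1 ≤ m) : #(LOWc m p) = p * m ^ (m - 1) := by
  apply card_filter_val_lt
  calc p * m ^ (m - 1) ≤ m * m ^ (m - 1) := Nat.mul_le_mul_right _ hpm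
    _ = m ^ m := by
      rw [← pow_succ']
      congr 1
      omega

lemma card_NAc (hpm : p ≤ m) (hm1 : 1 ≤ m) :
    #(NAc m p) = m ^ m - p * m ^ (m - 1) := by
  apply card_filter_le_val
  calc p * m ^ (m - 1) ≤ m * m ^ (m - 1) := Nat.mul_le_mul_right _ hpm
    _ = m ^ m := by
      rw [← pow_succ']
      congr 1
      omega

lemma NAc_card_eq (hpm : p ≤ m) (hm1 : 1 ≤ m) :
    #(NAc m p) = (m - p) * m ^ (m - 1) := by
  rw [card_NAc hpm hm1]
  have e : m ^ m = m * m ^ (m - 1) := by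
    rw [← pow_succ']; congr 1; omega
  rw [e, ← Nat.sub_mul]

lemma card_HIBc (hp1 : 1 ≤ p) (hpm : p ≤ m) (hdeg : ∀ v : Fin n, n ≤ G.degree v + m)
    (v : Fin n) :
    #(HIBc G m p v) = (m - p) ^ (1 + phtm G m v) * m ^ (m - 1 - phtm G m v) := by
  have hth := bTh_ge G hp1 hpm hdeg v
  have hsub : (m - p) ^ (1 + phtm G m v) * m ^ (m - 1 - phtm G m v) ≤ m ^ m := by
    unfold bTh at hth
    have h0 : 0 < p * m ^ (m - 1) := by
      have : 0 < m ^ (m - 1) := Nat.pow_pos (by omega)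
      exact Nat.mul_pos (by omega) this
    omega
  unfold HIBc bTh
  rw [card_filter_le_val (Nat.sub_le _ _)]
  omega

end Cards

section PiCards

variable {n : ℕ} (G : SimpleGraph (Fin n)) [DecidableRel G.Adj] {m p : ℕ}

lemma card_CEv {u v : Fin n} (huv : G.Adj u v) :
    #(CEv G m p u v) =
      #(LOWc m p) * (#(HIBc G m p u) *
        (#(NAc m p) ^ #(Hnbr G u) * (m ^ m) ^ (n - 2 - #(Hnbr G u)))) := by
  have hne : u ≠ v := huv.ne
  rw [CEv, Fintype.card_piFinset]
  simp only [apply_ite Finset.card]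
  rw [← Finset.mul_prod_erase univ _ (mem_univ v), if_pos rfl]
  congr 1
  have huv' : u ∈ univ.erase v := Finset.mem_erase.mpr ⟨hne, mem_univ u⟩
  rw [← Finset.mul_prod_erase _ _ huv', if_neg hne, if_pos rfl]
  congr 1
  set T := (univ.erase v).erase u with hT
  have hTcong : ∀ x ∈ T, (if x = v then #(LOWc m p) else if x = u then #(HIBc G m p u)
      else if ¬ G.Adj u x then #(NAc m p) else #(univ : Finset (Fin (m ^ m)))) =
      (if ¬ G.Adj u x then #(NAc m p) else #(univ : Finset (Fin (m ^ m)))) := by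
    intro x hx
    rw [hT] at hx
    have hx1 : x ≠ u := (Finset.mem_erase.mp hx).1
    have hx2 : x ≠ v := (Finset.mem_erase.mp (Finset.mem_erase.mp hx).2).1
    rw [if_neg hx2, if_neg hx1]
  rw [Finset.prod_congr rfl hTcong, prod_ite_const]
  have hfe : T.filter (fun x => ¬ G.Adj u x) = Hnbr G u := by
    ext x
    simp only [hT, Finset.mem_filter, Finset.mem_erase, mem_univ, and_true, true_and,
      Hnbr, Finset.mem_filter]
    constructor
    · rintro ⟨⟨hxu, hxv⟩, hadj⟩; exact ⟨hxu, hadj⟩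
    · rintro ⟨hxu, hadj⟩
      refine ⟨⟨hxu, ?_⟩, hadj⟩
      rintro rfl; exact hadj huv
  have hTcard : #T = n - 2 := by
    rw [hT, Finset.card_erase_of_mem huv', Finset.card_erase_of_mem (mem_univ v),
      Finset.card_univ, Fintype.card_fin]
    omega
  have hsplit := Finset.card_filter_add_card_filter_not
    (s := T) (p := fun x => ¬ G.Adj u x)
  rw [hfe] at hsplit ⊢
  have hcc : #(T.filter (fun x => ¬¬ G.Adj u x)) = n - 2 - #(Hnbr G u) := by omega
  rw [hcc]
  congr 1
  simp [Finset.card_univ]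

lemma card_AEv (v : Fin n) :
    #(AEv m p v (n := n)) = #(LOWc m p) * (m ^ m) ^ (n - 1) := by
  rw [AEv, Fintype.card_piFinset]
  simp only [apply_ite Finset.card]
  rw [← Finset.mul_prod_erase univ _ (mem_univ v), if_pos rfl]
  congr 1
  rw [Finset.prod_congr rfl (fun x hx => if_neg (Finset.mem_erase.mp hx).1),
    Finset.prod_const, Finset.card_erase_of_mem (mem_univ v), Finset.card_univ,
    Fintype.card_fin]
  simp [Finset.card_univ]

lemma card_BEv (v : Fin n) :
    #(BEv G m p v) = #(HIBc G m p v) *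
      (#(NAc m p) ^ #(Hnbr G v) * (m ^ m) ^ (n - 1 - #(Hnbr G v))) := by
  rw [BEv, Fintype.card_piFinset]
  simp only [apply_ite Finset.card]
  rw [← Finset.mul_prod_erase univ _ (mem_univ v), if_pos rfl]
  congr 1
  set T := univ.erase v with hT
  have hTcong : ∀ x ∈ T, (if x = v then #(HIBc G m p v)
      else if ¬ G.Adj v x then #(NAc m p) else #(univ : Finset (Fin (m ^ m)))) =
      (if ¬ G.Adj v x then #(NAc m p) else #(univ : Finset (Fin (m ^ m)))) := by
    intro x hx
    rw [if_neg (Finset.mem_erase.mp hx).1]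
  rw [Finset.prod_congr rfl hTcong, prod_ite_const]
  have hfe : T.filter (fun x => ¬ G.Adj v x) = Hnbr G v := by
    ext x
    simp only [hT, Finset.mem_filter, Finset.mem_erase, mem_univ, and_true, true_and,
      Hnbr, Finset.mem_filter]
    all_goals tauto
  have hTcard : #T = n - 1 := by
    rw [hT, Finset.card_erase_of_mem (mem_univ v), Finset.card_univ, Fintype.card_fin]
  have hsplit := Finset.card_filter_add_card_filter_not
    (s := T) (p := fun x => ¬ G.Adj v x)
  rw [hfe] at hsplit ⊢
  have hcc : #(T.filter (fun x => ¬¬ G.Adj v x)) = n - 1 - #(Hnbr G v) := by omega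
  rw [hcc]
  congr 1
  simp [Finset.card_univ]

end PiCards

section MkCB

variable {n : ℕ} (G : SimpleGraph (Fin n)) [DecidableRel G.Adj] {m p : ℕ}

/-- the complete bipartite subgraph extracted from a sample `ω` -/
def mkCB (hp1 : 1 ≤ p) (hpm : p ≤ m) (hdeg : ∀ v : Fin n, n ≤ G.degree v + m)
    (ω : Fin n → Fin (m ^ m)) (h : validCB G m p ω) : CBSub G where
  A := univ.filter (inA m p ω)
  B := univ.filter (inB G m p ω)
  nonemptyA := h.1
  nonemptyB := h.2
  disjointAB := by
    rw [Finset.disjoint_left]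
    intro a ha hb
    rw [mem_filter] at ha hb
    exact inB_not_inA G hp1 hpm hdeg hb.2 ha.2
  adj := by
    intro a ha b hb
    rw [mem_filter] at ha hb
    by_contra hadj
    have hne : a ≠ b := by
      rintro rfl
      exact inB_not_inA G hp1 hpm hdeg hb.2 ha.2
    exact hb.2.2 a (fun h' => hadj h'.symm) hne ha.2

lemma card_CEv_closed {n2 m1 : ℕ} (hp1 : 1 ≤ p) (hpm : p ≤ m)
    (hdeg : ∀ v : Fin n, n ≤ G.degree v + m) (hn2 : n = n2 + 2) (hm1 : m = m1 + 1)
    {u v : Fin n} (huv : G.Adj u v) :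
    #(CEv G m p u v) = p * (m - p) ^ m * m ^ (m * n2 + m1) := by
  have hm0 : 1 ≤ m := by omega
  rw [card_CEv G huv, card_LOWc hpm hm0, card_HIBc G hp1 hpm hdeg u,
    NAc_card_eq hpm hm0, card_Hnbr]
  have hph : phtm G m u + (n - 1 - G.degree u) + 1 = m := phtm_add G hp1 hpm hdeg u
  set a := phtm G m u with ha
  set d := n - 1 - G.degree u with hd
  have hdu : G.degree u < n := by simpa using G.degree_lt_card_verts u
  have hdeg1 : 0 < G.degree u := by
    rw [G.degree_pos_iff_exists_adj u]
    exact ⟨v, huv⟩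
  obtain ⟨d', hd'⟩ : ∃ d', n - 2 = d + d' := ⟨n - 2 - d, by omega⟩
  have e2 : m - 1 - a = d := by omega
  have e1 : m - 1 = a + d := by omega
  have e3 : n - 2 - d = d' := by omega
  rw [e2, e3, e1]
  have e4 : (m - p) ^ m = (m - p) ^ (a + d + 1) := by rw [show m = a + d + 1 by omega]
  have e5 : (m : ℕ) ^ m = m ^ (a + d + 1) := by rw [show m = a + d + 1 by omega]
  have e6 : m * n2 + m1 = (a + d + 1) * (d + d') + (a + d) := by
    rw [show m = a + d + 1 by omega, show m1 = a + d by omega, show n2 = d + d' by omega]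
  rw [e4, e5, e6]
  ring

lemma card_AEv_closed {n2 m1 : ℕ} (hp1 : 1 ≤ p) (hpm : p ≤ m)
    (hn2 : n = n2 + 2) (hm1 : m = m1 + 1) (v : Fin n) :
    #(AEv m p v (n := n)) = p * m ^ (m * n2 + m1 + m) := by
  have hm0 : 1 ≤ m := by omega
  rw [card_AEv, card_LOWc hpm hm0]
  have e1 : m - 1 = m1 := by omega
  have e2 : n - 1 = n2 + 1 := by omega
  rw [e1, e2]
  calc p * m ^ m1 * (m ^ m) ^ (n2 + 1)
      = p * (m ^ m1 * m ^ (m * (n2 + 1))) := by rw [← pow_mul, mul_assoc]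
    _ = p * m ^ (m1 + m * (n2 + 1)) := by rw [← pow_add]
    _ = p * m ^ (m * n2 + m1 + m) := by
        congr 1
        ring

lemma card_BEv_closed {n2 m1 : ℕ} (hp1 : 1 ≤ p) (hpm : p ≤ m)
    (hdeg : ∀ v : Fin n, n ≤ G.degree v + m) (hn2 : n = n2 + 2) (hm1 : m = m1 + 1)
    (v : Fin n) :
    #(BEv G m p v) = (m - p) ^ m * m ^ (m * n2 + m1 + 1) := by
  have hm0 : 1 ≤ m := by omega
  rw [card_BEv G v, card_HIBc G hp1 hpm hdeg v, NAc_card_eq hpm hm0, card_Hnbr]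
  have hph : phtm G m v + (n - 1 - G.degree v) + 1 = m := phtm_add G hp1 hpm hdeg v
  set a := phtm G m v with ha
  set d := n - 1 - G.degree v with hd
  have hdu : G.degree v < n := by simpa using G.degree_lt_card_verts v
  obtain ⟨e', he'⟩ : ∃ e', n - 1 = d + e' := ⟨n - 1 - d, by omega⟩
  have e2 : m - 1 - a = d := by omega
  have e3 : n - 1 - d = e' := by omega
  have e1 : m - 1 = a + d := by omega
  rw [e2, e3, e1]
  have e4 : (m - p) ^ m = (m - p) ^ (a + d + 1) := by rw [show m = a + d + 1 by omega]
  have e5 : (m : ℕ) ^ m = m ^ (a + d + 1) := by rw [show m = a + d + 1 by omega]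
  have e6 : m * n2 + m1 + 1 = (a + d + 1) * (d + e') := by
    rw [show m = a + d + 1 by omega, show m1 = a + d by omega,
      ← (show n2 + 1 = d + e' by omega)]
    ring
  rw [e4, e5, e6]
  ring

end MkCB

open Filter Real

/-- choice of the parameter `p` -/
noncomputable def pfun (ε : ℝ) (m : ℕ) : ℕ := ⌊Real.log m / (1 + ε)⌋₊

lemma analytic {ε : ℝ} (hε : 0 < ε) : ∀ᶠ m : ℕ in Filter.atTop,
    2 ≤ m ∧ 1 ≤ pfun ε m ∧ 2 * pfun ε m ≤ m ∧
    (m:ℝ) ^ m / (2 * ((m:ℝ) - (pfun ε m : ℝ)) ^ m) + (m:ℝ) / (2 * (pfun ε m : ℝ))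
      ≤ (0.722 + ε) * m / Real.logb 2 m := by
  have h1ε : (0:ℝ) < 1 + ε := by linarith
  have TX : Tendsto (fun m : ℕ => (m:ℝ)) atTop atTop := tendsto_natCast_atTop_atTop
  have TL : Tendsto (fun m : ℕ => Real.log m) atTop atTop :=
    Real.tendsto_log_atTop.comp TX
  have E0 : ∀ᶠ m : ℕ in atTop, 2 ≤ m := eventually_ge_atTop 2
  have E1 : ∀ᶠ m : ℕ in atTop, 1 + ε ≤ Real.log m := TL.eventually_ge_atTop _
  have E2 : ∀ᶠ m : ℕ in atTop, 4 * Real.log m ≤ (m:ℝ) := by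
    have LO : (fun m : ℕ => Real.log m) =o[atTop] (fun m : ℕ => (m:ℝ)) :=
      Real.isLittleO_log_id_atTop.comp_tendsto TX
    have hd := LO.def (by norm_num : (0:ℝ) < 1/4)
    filter_upwards [hd, E0] with m hm h2m
    have hx1 : (1:ℝ) ≤ (m:ℝ) := by exact_mod_cast Nat.one_le_of_lt h2m
    have hlog0 : 0 ≤ Real.log m := Real.log_nonneg hx1
    rw [Real.norm_eq_abs, Real.norm_eq_abs, abs_of_nonneg hlog0,
      abs_of_nonneg (by linarith : (0:ℝ) ≤ (m:ℝ))] at hm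
    linarith
  have E3 : ∀ᶠ m : ℕ in atTop, 2 * (Real.log m)^2 ≤ (m:ℝ) := by
    have LO : (fun m : ℕ => Real.log m) =o[atTop] (fun m : ℕ => (m:ℝ) ^ (1/4 : ℝ)) :=
      (isLittleO_log_rpow_atTop (by norm_num : (0:ℝ) < 1/4)).comp_tendsto TX
    have hd := LO.def (by norm_num : (0:ℝ) < 1/2)
    filter_upwards [hd, E0] with m hm h2m
    have hx1 : (1:ℝ) ≤ (m:ℝ) := by exact_mod_cast Nat.one_le_of_lt h2m
    have hx0 : (0:ℝ) ≤ (m:ℝ) := by linarith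
    have hlog0 : 0 ≤ Real.log m := Real.log_nonneg hx1
    rw [Real.norm_eq_abs, Real.norm_eq_abs, abs_of_nonneg hlog0,
      abs_of_nonneg (Real.rpow_nonneg hx0 _)] at hm
    have hsq : (Real.log m)^2 ≤ (1/2 * (m:ℝ) ^ (1/4:ℝ))^2 :=
      pow_le_pow_left₀ hlog0 hm 2
    have hr : ((m:ℝ) ^ (1/4:ℝ))^(2:ℕ) = (m:ℝ) ^ (1/2:ℝ) := by
      rw [← Real.rpow_natCast ((m:ℝ) ^ (1/4:ℝ)) 2, ← Real.rpow_mul hx0]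
      norm_num
    have hle : (m:ℝ) ^ (1/2:ℝ) ≤ (m:ℝ) := by
      calc (m:ℝ) ^ (1/2:ℝ) ≤ (m:ℝ) ^ (1:ℝ) :=
            Real.rpow_le_rpow_of_exponent_le hx1 (by norm_num)
        _ = (m:ℝ) := Real.rpow_one _
    rw [mul_pow, hr] at hsq
    nlinarith [hsq, hle]
  have E4 : ∀ᶠ m : ℕ in atTop,
      Real.exp 1 * Real.log m * ((m:ℝ) ^ (1/(1+ε) - 1 : ℝ)) ≤ 0.0008 := by
    have hδ : (0:ℝ) < ε / (1+ε) := div_pos hε h1ε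
    have LO : (fun m : ℕ => Real.log m) =o[atTop]
        (fun m : ℕ => (m:ℝ) ^ (ε/(1+ε) : ℝ)) :=
      (isLittleO_log_rpow_atTop hδ).comp_tendsto TX
    have T0 : Tendsto (fun m : ℕ => Real.exp 1 * (Real.log m / (m:ℝ) ^ (ε/(1+ε):ℝ)))
        atTop (nhds 0) := by
      have h := LO.tendsto_div_nhds_zero
      simpa using h.const_mul (Real.exp 1)
    have hev := T0.eventually_lt_const (show (0:ℝ) < 0.0008 by norm_num)
    filter_upwards [hev, E0] with m hm h2m
    have hx0 : (0:ℝ) < (m:ℝ) := by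
      have h : (0:ℕ) < m := by omega
      exact_mod_cast h
    have hc : (1/(1+ε) - 1 : ℝ) = -(ε/(1+ε)) := by field_simp; ring
    rw [hc, Real.rpow_neg hx0.le]
    have heq : Real.exp 1 * Real.log m * ((m:ℝ) ^ (ε/(1+ε):ℝ))⁻¹
        = Real.exp 1 * (Real.log m / (m:ℝ) ^ (ε/(1+ε):ℝ)) := by ring
    rw [heq]
    exact hm.le
  have E5 : ∀ᶠ m : ℕ in atTop,
      (1 + 1.2*ε) * (1+ε) ≤ Real.log m * (0.2*ε) := by
    have hc : (0:ℝ) < 0.2*ε := by linarith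
    filter_upwards [TL.eventually_ge_atTop ((1 + 1.2*ε) * (1+ε) / (0.2*ε))] with m hm
    calc (1 + 1.2*ε) * (1+ε) = ((1 + 1.2*ε) * (1+ε) / (0.2*ε)) * (0.2*ε) := by
          field_simp
      _ ≤ Real.log m * (0.2*ε) := mul_le_mul_of_nonneg_right hm hc.le
  filter_upwards [E0, E1, E2, E3, E4, E5] with m h0 h1 h2 h3 h4 h5
  have hx2 : (2:ℝ) ≤ (m:ℝ) := by exact_mod_cast h0
  have hx0 : (0:ℝ) < (m:ℝ) := by linarith
  have hL0 : (0:ℝ) < Real.log m := Real.log_pos (by linarith)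
  have hfl : ((pfun ε m : ℕ):ℝ) ≤ Real.log m / (1+ε) :=
    Nat.floor_le (by positivity)
  have hfl2 : Real.log m / (1+ε) < ((pfun ε m : ℕ):ℝ) + 1 := Nat.lt_floor_add_one _
  have hp1 : 1 ≤ pfun ε m := by
    apply Nat.le_floor
    rw [Nat.cast_one, le_div_iff₀ h1ε]
    linarith
  have hpr1 : (1:ℝ) ≤ ((pfun ε m : ℕ):ℝ) := by exact_mod_cast hp1
  have hprL : ((pfun ε m : ℕ):ℝ) ≤ Real.log m :=
    le_trans hfl (div_le_self hL0.le (by linarith))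
  have hprx4 : ((pfun ε m : ℕ):ℝ) ≤ (m:ℝ)/4 := by linarith
  have hp2 : 2 * pfun ε m ≤ m := by
    have h : ((2 * pfun ε m : ℕ) : ℝ) ≤ (m:ℝ) := by push_cast; linarith
    exact_mod_cast h
  refine ⟨h0, hp1, hp2, ?_⟩
  set pr : ℝ := ((pfun ε m : ℕ):ℝ) with hprdef
  set L : ℝ := Real.log m with hLdef
  have hxp0 : (0:ℝ) < (m:ℝ) - pr := by linarith
  have hxp2 : (m:ℝ)/2 ≤ (m:ℝ) - pr := by linarith
  have hr0 : 0 < (m:ℝ)/((m:ℝ) - pr) := div_pos hx0 hxp0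
  -- term 1 bound
  have hterm1 : (m:ℝ)^m / (2 * ((m:ℝ) - pr)^m) ≤ 0.0004 * (m:ℝ) / L := by
    have hlogr : Real.log ((m:ℝ)/((m:ℝ) - pr)) ≤ pr/((m:ℝ) - pr) := by
      have h := Real.log_le_sub_one_of_pos hr0
      have e : (m:ℝ)/((m:ℝ) - pr) - 1 = pr/((m:ℝ) - pr) := by field_simp; ring
      linarith [e ▸ h]
    have hmul : (m:ℝ) * (pr/((m:ℝ) - pr)) ≤ pr + 1 := by
      have e : (m:ℝ) * (pr/((m:ℝ) - pr)) = pr + pr^2/((m:ℝ) - pr) := by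
        field_simp
        ring
      have hb : pr^2/((m:ℝ) - pr) ≤ 2*pr^2/(m:ℝ) := by
        rw [div_le_div_iff₀ hxp0 hx0]
        nlinarith
      have hc : 2*pr^2/(m:ℝ) ≤ 1 := by
        rw [div_le_one hx0]
        nlinarith [hprL, h3]
      rw [e]
      linarith
    have hexp : ((m:ℝ)/((m:ℝ) - pr))^m
        = Real.exp ((m:ℝ) * Real.log ((m:ℝ)/((m:ℝ) - pr))) := by
      rw [Real.exp_nat_mul, Real.exp_log hr0]
    have hxs : (m:ℝ)^(1/(1+ε) - 1:ℝ) = (m:ℝ)^(1/(1+ε):ℝ)/(m:ℝ) := by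
      rw [Real.rpow_sub hx0, Real.rpow_one]
    rw [hxs] at h4
    have h4' : Real.exp 1 * L * (m:ℝ)^(1/(1+ε):ℝ) ≤ 0.0008 * (m:ℝ) := by
      have := mul_le_mul_of_nonneg_right h4 hx0.le
      calc Real.exp 1 * L * (m:ℝ)^(1/(1+ε):ℝ)
          = Real.exp 1 * L * ((m:ℝ)^(1/(1+ε):ℝ)/(m:ℝ)) * (m:ℝ) := by
            field_simp
        _ ≤ 0.0008 * (m:ℝ) := this
    calc (m:ℝ)^m / (2 * ((m:ℝ) - pr)^m) = ((m:ℝ)/((m:ℝ) - pr))^m / 2 := by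
          rw [div_pow]
          ring
      _ = Real.exp ((m:ℝ) * Real.log ((m:ℝ)/((m:ℝ) - pr))) / 2 := by rw [hexp]
      _ ≤ Real.exp (L/(1+ε) + 1) / 2 := by
          gcongr
          · calc (m:ℝ) * Real.log ((m:ℝ)/((m:ℝ) - pr)) ≤ (m:ℝ) * (pr/((m:ℝ) - pr)) :=
                mul_le_mul_of_nonneg_left hlogr hx0.le
            _ ≤ pr + 1 := hmul
            _ ≤ L/(1+ε) + 1 := by linarith [hfl]
      _ = Real.exp 1 * (m:ℝ)^(1/(1+ε):ℝ) / 2 := by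
          rw [Real.exp_add, Real.rpow_def_of_pos hx0]
          rw [mul_one_div, mul_comm (Real.exp (L/(1+ε))) (Real.exp 1)]
      _ ≤ 0.0004 * (m:ℝ) / L := by
          rw [div_le_div_iff₀ (by norm_num) hL0]
          nlinarith [h4']
  -- term 2 bound
  have hLp : L ≤ (1 + 1.2*ε) * pr := by
    have hA : L < (pr + 1) * (1+ε) := by
      rw [div_lt_iff₀ h1ε] at hfl2
      linarith
    have h12 : (0:ℝ) < 1 + 1.2*ε := by linarith
    have step : (1+1.2*ε) * L < (1+1.2*ε) * ((pr+1)*(1+ε)) :=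
      mul_lt_mul_of_pos_left hA h12
    have final : L * (1+ε) ≤ ((1+1.2*ε) * pr) * (1+ε) := by nlinarith [step, h5]
    exact le_of_mul_le_mul_right final h1ε
  have hterm2 : (m:ℝ) / (2 * pr) ≤ (0.5 + 0.6*ε) * (m:ℝ) / L := by
    rw [div_le_div_iff₀ (by positivity) hL0]
    nlinarith [mul_le_mul_of_nonneg_left hLp hx0.le]
  -- combine
  have hconst : 0.0004 + (0.5 + 0.6*ε) ≤ (0.722 + ε) * Real.log 2 := by
    nlinarith [Real.log_two_gt_d9, hε]
  have hrhs : (0.722 + ε) * (m:ℝ) / Real.logb 2 (m:ℝ)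
      = ((0.722 + ε) * Real.log 2) * ((m:ℝ) / L) := by
    rw [Real.logb]
    rw [div_div_eq_mul_div]
    rw [← hLdef]
    have hL0' : L ≠ 0 := hL0.ne'
    field_simp
  calc (m:ℝ)^m / (2 * ((m:ℝ) - pr)^m) + (m:ℝ) / (2 * pr)
      ≤ 0.0004 * (m:ℝ) / L + (0.5 + 0.6*ε) * (m:ℝ) / L := add_le_add hterm1 hterm2
    _ = (0.0004 + (0.5 + 0.6*ε)) * ((m:ℝ) / L) := by ring
    _ ≤ ((0.722 + ε) * Real.log 2) * ((m:ℝ) / L) :=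
        mul_le_mul_of_nonneg_right hconst (by positivity)
    _ = (0.722 + ε) * (m:ℝ) / Real.logb 2 (m:ℝ) := hrhs.symm


end DGaux

/-- **Fractional covers of very dense graphs.**  For every `ε > 0` there is `M₀`
such that for every `m ≥ M₀`, every `n` and every simple graph `G` on `n`
vertices in which every vertex has degree at least `n - m` (stated as
`n ≤ deg v + m`), there is a fractional CB-cover of `G` (nonnegative weights on
complete bipartite subgraphs such that every edge gets total weight at least `1`)
in which every vertex has load at most `(0.722 + ε) · m / log₂ m`; i.e.
`vc*_CB(G) ≤ (0.722 + ε) · m / log₂ m`. -/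
theorem dense_graph_fractional_cover :
    ∀ ε : ℝ, 0 < ε → ∃ M₀ : ℕ, ∀ m : ℕ, M₀ ≤ m → ∀ n : ℕ,
      ∀ G : SimpleGraph (Fin n), ∀ _ : DecidableRel G.Adj,
        (∀ v : Fin n, n ≤ G.degree v + m) →
        ∃ (M : ℕ) (f : Fin M → CBSub G) (w : Fin M → ℝ),
          (∀ i, 0 ≤ w i) ∧
          (∀ e ∈ G.edgeSet,
            1 ≤ ∑ i ∈ Finset.univ.filter (fun i : Fin M => e ∈ (f i).edges), w i) ∧
          ∀ v : Fin n,
            ∑ i ∈ Finset.univ.filter (fun i : Fin M => v ∈ (f i).verts), w i ≤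
              (0.722 + ε) * m / Real.logb 2 m := by
  intro ε hε
  obtain ⟨M₀, hM₀⟩ := Filter.eventually_atTop.mp (DGaux.analytic hε)
  refine ⟨M₀, ?_⟩
  intro m hm n G instG hdeg
  letI := instG
  obtain ⟨hm2, hp1, hp2, hbound⟩ := hM₀ m hm
  set p := DGaux.pfun ε m with hpdef
  have hpm : p ≤ m := by omega
  have hRHS0 : (0:ℝ) ≤ (0.722 + ε) * m / Real.logb 2 m := by
    apply div_nonneg
    · have h1 : (0:ℝ) ≤ (m:ℝ) := Nat.cast_nonneg m
      nlinarith
    · apply Real.logb_nonneg one_lt_two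
      have : (1:ℕ) ≤ m := by omega
      exact_mod_cast this
  by_cases hE : G.edgeFinset = ∅
  · refine ⟨0, Fin.elim0, Fin.elim0, fun i => i.elim0, ?_, ?_⟩
    · intro e he
      have hmem : e ∈ G.edgeFinset := SimpleGraph.mem_edgeFinset.mpr he
      rw [hE] at hmem
      exact absurd hmem (Finset.notMem_empty e)
    · intro v
      have h1 : (Finset.univ.filter (fun i : Fin 0 => v ∈ (Fin.elim0 i : CBSub G).verts)) = ∅ :=
        Finset.eq_empty_of_forall_notMem (fun i => i.elim0)
      rw [h1, Finset.sum_empty]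
      exact hRHS0
  · -- there is an edge
    have hex : ∃ u v : Fin n, G.Adj u v := by
      obtain ⟨e0, he0⟩ := Finset.nonempty_iff_ne_empty.mpr hE
      revert he0
      refine Sym2.ind (fun x y he0 => ?_) e0
      exact ⟨x, y, by simpa using he0⟩
    obtain ⟨u0, v0, h0⟩ := hex
    have hn2' : 2 ≤ n := by
      have h1 := u0.isLt
      have h2 := v0.isLt
      have h3 : u0.val ≠ v0.val := fun hc => h0.ne (Fin.ext hc)
      omega
    obtain ⟨n2, hn2⟩ : ∃ n2, n = n2 + 2 := ⟨n - 2, by omega⟩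
    obtain ⟨m1, hm1⟩ : ∃ m1, m = m1 + 1 := ⟨m - 1, by omega⟩
    have CB0 : CBSub G := {
      A := {u0}, B := {v0},
      nonemptyA := Finset.singleton_nonempty _,
      nonemptyB := Finset.singleton_nonempty _,
      disjointAB := by
        simp only [Finset.disjoint_singleton_left, Finset.mem_singleton]
        exact h0.ne,
      adj := by
        intro a ha b hb
        rw [Finset.mem_singleton] at ha hb
        subst ha; subst hb; exact h0 }
    set Ecnt : ℕ := p * (m - p) ^ m * m ^ (m * n2 + m1) with hEdef
    have hEpos : 0 < Ecnt := by
      apply Nat.mul_pos (Nat.mul_pos (by omega) (pow_pos (by omega : 0 < m - p) _))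
      exact pow_pos (by omega : 0 < m) _
    have hEcast : (0:ℝ) < (Ecnt:ℝ) := by exact_mod_cast hEpos
    set W : ℝ := (2 * (Ecnt:ℝ))⁻¹ with hWdef
    have hW0 : 0 ≤ W := by rw [hWdef]; positivity
    set F : (Fin n → Fin (m ^ m)) → CBSub G := fun ω =>
      if h : DGaux.validCB G m p ω then DGaux.mkCB G hp1 hpm hdeg ω h else CB0 with hFdef
    set Wf : (Fin n → Fin (m ^ m)) → ℝ :=
      (fun ω => if DGaux.validCB G m p ω then W else 0) with hWfdef
    have hWf0 : ∀ ω, 0 ≤ Wf ω := by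
      intro ω
      rw [hWfdef]
      dsimp only
      split_ifs
      · exact hW0
      · exact le_rfl
    set eqv := Fintype.equivFin (Fin n → Fin (m ^ m)) with heqv
    refine ⟨Fintype.card (Fin n → Fin (m ^ m)), fun i => F (eqv.symm i),
      fun i => Wf (eqv.symm i), fun i => hWf0 _, ?_, ?_⟩
    · -- edge coverage
      intro e he
      revert he
      refine Sym2.ind (fun u v he => ?_) e
      rw [SimpleGraph.mem_edgeSet] at he
      have main : (1:ℝ) ≤ ∑ ω : Fin n → Fin (m ^ m),
          (if s(u,v) ∈ (F ω).edges then Wf ω else 0) := by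
        set Cov := DGaux.CEv G m p u v ∪ DGaux.CEv G m p v u with hCov
        have hval : ∀ ω ∈ Cov, (if s(u,v) ∈ (F ω).edges then Wf ω else 0) = W := by
          intro ω hω
          rw [hCov, Finset.mem_union] at hω
          have key : DGaux.validCB G m p ω ∧ s(u,v) ∈ (F ω).edges := by
            rcases hω with hω | hω
            · obtain ⟨hA, hB⟩ := DGaux.mem_CEv he hω
              have hvalid : DGaux.validCB G m p ω :=
                ⟨⟨v, Finset.mem_filter.mpr ⟨Finset.mem_univ _, hA⟩⟩,
                 ⟨u, Finset.mem_filter.mpr ⟨Finset.mem_univ _, hB⟩⟩⟩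
              refine ⟨hvalid, ?_⟩
              have hFω : F ω = DGaux.mkCB G hp1 hpm hdeg ω hvalid := by
                rw [hFdef]
                exact dif_pos hvalid
              rw [hFω, CBSub.edges]
              apply Finset.mem_image.mpr
              refine ⟨(v, u), Finset.mem_product.mpr ⟨?_, ?_⟩, ?_⟩
              · exact Finset.mem_filter.mpr ⟨Finset.mem_univ _, hA⟩
              · exact Finset.mem_filter.mpr ⟨Finset.mem_univ _, hB⟩
              · exact Sym2.eq_swap
            · obtain ⟨hA, hB⟩ := DGaux.mem_CEv he.symm hω
              have hvalid : DGaux.validCB G m p ω :=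
                ⟨⟨u, Finset.mem_filter.mpr ⟨Finset.mem_univ _, hA⟩⟩,
                 ⟨v, Finset.mem_filter.mpr ⟨Finset.mem_univ _, hB⟩⟩⟩
              refine ⟨hvalid, ?_⟩
              have hFω : F ω = DGaux.mkCB G hp1 hpm hdeg ω hvalid := by
                rw [hFdef]
                exact dif_pos hvalid
              rw [hFω, CBSub.edges]
              apply Finset.mem_image.mpr
              refine ⟨(u, v), Finset.mem_product.mpr ⟨?_, ?_⟩, ?_⟩
              · exact Finset.mem_filter.mpr ⟨Finset.mem_univ _, hA⟩
              · exact Finset.mem_filter.mpr ⟨Finset.mem_univ _, hB⟩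
              · rfl
          rw [if_pos key.2, hWfdef]
          dsimp only
          rw [if_pos key.1]
        have hd1 : #(DGaux.CEv G m p u v) = Ecnt :=
          DGaux.card_CEv_closed G hp1 hpm hdeg hn2 hm1 he
        have hd2 : #(DGaux.CEv G m p v u) = Ecnt :=
          DGaux.card_CEv_closed G hp1 hpm hdeg hn2 hm1 he.symm
        have hdisj : Disjoint (DGaux.CEv G m p u v) (DGaux.CEv G m p v u) := by
          rw [Finset.disjoint_left]
          intro ω h1 h2
          exact DGaux.inB_not_inA G hp1 hpm hdeg (DGaux.mem_CEv he h1).2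
            (DGaux.mem_CEv he.symm h2).1
        have hcard : #Cov = 2 * Ecnt := by
          rw [hCov, Finset.card_union_of_disjoint hdisj, hd1, hd2, two_mul]
        have h2E : (0:ℝ) < 2 * (Ecnt:ℝ) := by linarith
        calc (1:ℝ) = (#Cov : ℝ) * W := by
              rw [hcard, hWdef]
              push_cast
              rw [mul_inv_cancel₀ h2E.ne']
          _ = ∑ _ω ∈ Cov, W := by rw [Finset.sum_const, nsmul_eq_mul]
          _ = ∑ ω ∈ Cov, (if s(u,v) ∈ (F ω).edges then Wf ω else 0) :=
              (Finset.sum_congr rfl hval).symm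
          _ ≤ ∑ ω : Fin n → Fin (m ^ m), (if s(u,v) ∈ (F ω).edges then Wf ω else 0) := by
              apply Finset.sum_le_sum_of_subset_of_nonneg (Finset.subset_univ _)
              intro ω _ _
              split_ifs
              · exact hWf0 ω
              · exact le_rfl
      calc (1:ℝ) ≤ ∑ ω : Fin n → Fin (m ^ m),
            (if s(u,v) ∈ (F ω).edges then Wf ω else 0) := main
        _ = ∑ i ∈ Finset.univ.filter
              (fun i => s(u,v) ∈ ((fun i => F (eqv.symm i)) i).edges),
              (fun i => Wf (eqv.symm i)) i := by
            rw [Finset.sum_filter]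
            exact (Equiv.sum_comp eqv.symm
              (fun ω => if s(u,v) ∈ (F ω).edges then Wf ω else 0)).symm
    · -- vertex load
      intro v
      set UB := DGaux.AEv m p v ∪ DGaux.BEv G m p v with hUB
      have hpt : ∀ ω : Fin n → Fin (m ^ m),
          (if v ∈ (F ω).verts then Wf ω else 0) ≤ (if ω ∈ UB then W else 0) := by
        intro ω
        by_cases hmem : ω ∈ UB
        · rw [if_pos hmem]
          split_ifs
          · rw [hWfdef]
            dsimp only
            split_ifs
            · exact le_rfl
            · exact hW0
          · exact hW0
        · rw [if_neg hmem]
          split_ifs with hv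
          · rw [hWfdef]
            dsimp only
            split_ifs with hvalid
            · exfalso
              apply hmem
              have hFω : F ω = DGaux.mkCB G hp1 hpm hdeg ω hvalid := by
                rw [hFdef]
                exact dif_pos hvalid
              rw [hFω, CBSub.verts, Finset.mem_union] at hv
              rw [hUB, Finset.mem_union]
              rcases hv with hv | hv
              · exact Or.inl (DGaux.mem_AEv_of_inA (Finset.mem_filter.mp hv).2)
              · exact Or.inr (DGaux.mem_BEv_of_inB (Finset.mem_filter.mp hv).2)
            · exact le_rfl
          · exact le_rfl
      have main : ∑ ω : Fin n → Fin (m ^ m), (if v ∈ (F ω).verts then Wf ω else 0)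
          ≤ (0.722 + ε) * m / Real.logb 2 m := by
        calc ∑ ω : Fin n → Fin (m ^ m), (if v ∈ (F ω).verts then Wf ω else 0)
            ≤ ∑ ω : Fin n → Fin (m ^ m), (if ω ∈ UB then W else 0) :=
              Finset.sum_le_sum (fun ω _ => hpt ω)
          _ = ∑ _ω ∈ UB, W := by rw [Finset.sum_ite_mem, Finset.univ_inter]
          _ = (#UB : ℝ) * W := by rw [Finset.sum_const, nsmul_eq_mul]
          _ ≤ ((#(DGaux.AEv m p v (n := n)) + #(DGaux.BEv G m p v) : ℕ) : ℝ) * W := by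
              apply mul_le_mul_of_nonneg_right _ hW0
              rw [hUB]
              exact_mod_cast Finset.card_union_le _ _
          _ = (m:ℝ)^m / (2*((m:ℝ) - (p:ℝ))^m) + (m:ℝ)/(2*(p:ℝ)) := by
              rw [DGaux.card_AEv_closed hp1 hpm hn2 hm1 v,
                DGaux.card_BEv_closed G hp1 hpm hdeg hn2 hm1 v, hWdef, hEdef]
              have hmR : (0:ℝ) < (m:ℝ) := by
                have : (0:ℕ) < m := by omega
                exact_mod_cast this
              have hpR : (0:ℝ) < (p:ℝ) := by
                have : (0:ℕ) < p := by omega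
                exact_mod_cast this
              have hqR : (0:ℝ) < (m:ℝ) - (p:ℝ) := by
                have h1 : (p:ℝ) < (m:ℝ) := by
                  have : p < m := by omega
                  exact_mod_cast this
                linarith
              push_cast [Nat.cast_sub hpm]
              rw [pow_add, pow_succ]
              field_simp
          _ ≤ (0.722 + ε) * m / Real.logb 2 m := hbound
      calc ∑ i ∈ Finset.univ.filter
            (fun i => v ∈ ((fun i => F (eqv.symm i)) i).verts),
            (fun i => Wf (eqv.symm i)) i
          = ∑ ω : Fin n → Fin (m ^ m), (if v ∈ (F ω).verts then Wf ω else 0) := by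
            rw [Finset.sum_filter]
            exact Equiv.sum_comp eqv.symm
              (fun ω => if v ∈ (F ω).verts then Wf ω else 0)
        _ ≤ (0.722 + ε) * m / Real.logb 2 m := main
end

section
/- Let G be a finite simple graph on n vertices and let k be an integer with 1 ≤ k ≤ n. Then there exists a partition of the edge set of G into the edge sets of fewer than 2^k·n/k complete bipartite subgraphs of G such that every vertex of G is contained in at most 2^(k−1) + ⌈n/k⌉ of these subgraphs. -/
open Finset

namespace LemmaKAux

variable {n : ℕ} (k : ℕ) (G : SimpleGraph (Fin n))

open Classical in
/-- Earlier neighbors of `v` in class `i` (classes of size `k` by value of `⌊·/k⌋`). -/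
noncomputable def tset (v : Fin n) (i : ℕ) : Finset (Fin n) :=
  univ.filter fun u => G.Adj u v ∧ u < v ∧ (u : ℕ) / k = i

lemma mem_tset {v u : Fin n} {i : ℕ} :
    u ∈ tset k G v i ↔ G.Adj u v ∧ u < v ∧ (u : ℕ) / k = i := by
  simp [tset]

/-- The index set of the bipartite decomposition. -/
noncomputable def types : Finset (ℕ × Finset (Fin n)) :=
  ((univ ×ˢ Finset.range n).filter fun p : Fin n × ℕ => (tset k G p.1 p.2).Nonempty).image
    fun p => (p.2, tset k G p.1 p.2)

lemma mem_types {p : ℕ × Finset (Fin n)} :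
    p ∈ types k G ↔ ∃ v : Fin n, p.1 < n ∧ (tset k G v p.1).Nonempty ∧ tset k G v p.1 = p.2 := by
  classical
  constructor
  · intro hp
    simp only [types, mem_image, mem_filter, mem_product, mem_range] at hp
    obtain ⟨q, ⟨⟨-, hq2⟩, hne⟩, rfl⟩ := hp
    exact ⟨q.1, hq2, hne, rfl⟩
  · rintro ⟨v, h1, h2, h3⟩
    simp only [types, mem_image, mem_filter, mem_product, mem_range]
    exact ⟨(v, p.1), ⟨⟨mem_univ _, h1⟩, h2⟩, by rw [h3]⟩

noncomputable def bset (i : ℕ) (S : Finset (Fin n)) : Finset (Fin n) :=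
  univ.filter fun v => tset k G v i = S

lemma mem_bset {i : ℕ} {S : Finset (Fin n)} {v : Fin n} :
    v ∈ bset k G i S ↔ tset k G v i = S := by simp [bset]

/-- The complete bipartite subgraph associated to a type `(i, S)`. -/
noncomputable def toCBSub (p : ℕ × Finset (Fin n)) (hp : p ∈ types k G) : CBSub G where
  A := p.2
  B := bset k G p.1 p.2
  nonemptyA := by
    obtain ⟨v, -, h2, h3⟩ := (mem_types k G).1 hp
    rwa [h3] at h2
  nonemptyB := by
    obtain ⟨v, -, -, h3⟩ := (mem_types k G).1 hp
    exact ⟨v, (mem_bset k G).2 h3⟩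
  disjointAB := by
    rw [Finset.disjoint_right]
    intro x hxB hxA
    rw [mem_bset] at hxB
    rw [← hxB, mem_tset] at hxA
    exact lt_irrefl x hxA.2.1
  adj := by
    intro a ha b hb
    rw [mem_bset] at hb
    rw [← hb, mem_tset] at ha
    exact ha.1

lemma verts_toCBSub {p : ℕ × Finset (Fin n)} (hp : p ∈ types k G) {v : Fin n} :
    v ∈ (toCBSub k G p hp).verts ↔ v ∈ p.2 ∨ tset k G v p.1 = p.2 := by
  simp [CBSub.verts, toCBSub, mem_bset]

lemma edge_mem_iff {p : ℕ × Finset (Fin n)} (hp : p ∈ types k G) {a b : Fin n}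
    (hab : a < b) (hadj : G.Adj a b) :
    s(a, b) ∈ (toCBSub k G p hp).edges ↔ p = ((a : ℕ) / k, tset k G b ((a : ℕ) / k)) := by
  constructor
  · intro h
    simp only [CBSub.edges, toCBSub, mem_image, mem_product] at h
    obtain ⟨⟨x, y⟩, ⟨hx, hy⟩, hxy⟩ := h
    rw [mem_bset] at hy
    have hxS : x ∈ tset k G y p.1 := by rw [hy]; exact hx
    rw [mem_tset] at hxS
    rw [Sym2.eq_iff] at hxy
    rcases hxy with ⟨rfl, rfl⟩ | ⟨rfl, rfl⟩
    · exact Prod.ext (hxS.2.2.symm) (by rw [← hy, hxS.2.2])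
    · exact absurd hab (not_lt_of_gt hxS.2.1)
  · rintro rfl
    simp only [CBSub.edges, toCBSub, mem_image, mem_product]
    refine ⟨(a, b), ⟨?_, ?_⟩, rfl⟩
    · exact (mem_tset k G).2 ⟨hadj, hab, rfl⟩
    · exact (mem_bset k G).2 rfl


/-- The class of vertices with `⌊v/k⌋ = i`. -/
def Kclass (i : ℕ) : Finset (Fin n) := univ.filter fun v : Fin n => (v : ℕ) / k = i

lemma mem_Kclass {i : ℕ} {v : Fin n} : v ∈ Kclass k i ↔ (v : ℕ) / k = i := by
  simp [Kclass]

lemma card_Kclass_le (hk : 1 ≤ k) (i : ℕ) : (Kclass (n := n) k i).card ≤ k := by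
  have : (Kclass (n := n) k i).card ≤ (Finset.range k).card := by
    refine card_le_card_of_injOn (fun v => (v : ℕ) % k) ?_ ?_
    · intro v _
      exact mem_range.2 (Nat.mod_lt _ hk)
    · intro v hv w hw h
      rw [mem_coe, mem_Kclass] at hv hw
      have h' : (v : ℕ) % k = (w : ℕ) % k := h
      refine Fin.ext ?_
      rw [← Nat.div_add_mod (v : ℕ) k, ← Nat.div_add_mod (w : ℕ) k, hv, hw, h']
  simpa using this

lemma card_types_filter_pow (hk : 1 ≤ k) (i : ℕ) :
    ((types k G).filter fun p => p.1 = i).card ≤ 2 ^ k - 1 := by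
  classical
  have h1 : ((types k G).filter fun p => p.1 = i).card ≤
      ((Kclass (n := n) k i).powerset.erase ∅).card := by
    refine card_le_card_of_injOn (Prod.snd) ?_ ?_
    · intro p hp
      simp only [mem_coe, mem_filter] at hp
      obtain ⟨hp, rfl⟩ := hp
      obtain ⟨v, -, h2, h3⟩ := (mem_types k G).1 hp
      rw [mem_coe, mem_erase, mem_powerset]
      constructor
      · rw [← h3]
        exact h2.ne_empty
      · intro u hu
        rw [← h3, mem_tset] at hu
        simp only [Kclass, mem_filter]
        exact ⟨mem_univ _, hu.2.2⟩
    · intro p hp q hq h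
      simp only [mem_coe, mem_filter] at hp hq
      exact Prod.ext (hp.2.trans hq.2.symm) h
  refine h1.trans ?_
  have h2 : ((Kclass (n := n) k i).powerset.erase ∅).card ≤ 2 ^ (Kclass (n := n) k i).card - 1 := by
    rw [card_erase_of_mem (by simp), card_powerset]
  refine h2.trans (Nat.sub_le_sub_right ?_ 1)
  exact Nat.pow_le_pow_right (by norm_num) (card_Kclass_le k hk i)

lemma card_types_filter_lin (i : ℕ) :
    ((types k G).filter fun p => p.1 = i).card ≤ n - 1 - i * k := by
  classical
  have hsub : ((types k G).filter fun p => p.1 = i) ⊆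
      (univ.filter fun v : Fin n => i * k < (v : ℕ)).image fun v => (i, tset k G v i) := by
    intro p hp
    simp only [mem_filter] at hp
    obtain ⟨hp, hi⟩ := hp
    obtain ⟨v, -, h2, h3⟩ := (mem_types k G).1 hp
    subst hi
    rw [mem_image]
    refine ⟨v, mem_filter.2 ⟨mem_univ _, ?_⟩, by rw [h3]⟩
    obtain ⟨u, hu⟩ := h2
    rw [mem_tset] at hu
    have h4 : p.1 * k ≤ (u : ℕ) := by
      rw [← hu.2.2]
      exact Nat.div_mul_le_self _ _
    have h5 : (u : ℕ) < (v : ℕ) := hu.2.1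
    omega
  refine (card_le_card hsub).trans ((card_image_le).trans ?_)
  have : (univ.filter fun v : Fin n => i * k < (v : ℕ)).card ≤ (Finset.range (n - 1 - i * k)).card := by
    refine card_le_card_of_injOn (fun v => (v : ℕ) - (i * k + 1)) ?_ ?_
    · intro v hv
      rw [mem_coe, mem_filter] at hv
      have hv2 := hv.2
      have hvlt := v.isLt
      exact mem_range.2 (show (v : ℕ) - (i * k + 1) < n - 1 - i * k by omega)
    · intro v hv w hw h
      have h' : (v : ℕ) - (i * k + 1) = (w : ℕ) - (i * k + 1) := h
      rw [mem_coe, mem_filter] at hv hw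
      have hv2 := hv.2
      have hw2 := hw.2
      have hv' := v.isLt
      have hw' := w.isLt
      exact Fin.ext (by omega)
  simpa using this

lemma card_types_mul_lt (hk : 1 ≤ k) (hkn : k ≤ n) :
    (types k G).card * k < 2 ^ k * n := by
  classical
  have hn : 1 ≤ n := hk.trans hkn
  set q := (n - 1) / k with hq
  set r := (n - 1) % k with hr
  have hdm : k * q + r = n - 1 := Nat.div_add_mod (n - 1) k
  have hrk : r < k := Nat.mod_lt _ hk
  have hqn : q + 1 ≤ n := by
    have : q ≤ n - 1 := Nat.div_le_self _ _
    omega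
  have hsum : (types k G).card = ∑ i ∈ Finset.range n,
      ((types k G).filter fun p => p.1 = i).card := by
    apply card_eq_sum_card_fiberwise
    intro p hp
    obtain ⟨v, h1, -, -⟩ := (mem_types k G).1 hp
    exact mem_range.2 h1
  have htrunc : ∑ i ∈ Finset.range n, ((types k G).filter fun p => p.1 = i).card
      = ∑ i ∈ Finset.range (q + 1), ((types k G).filter fun p => p.1 = i).card := by
    symm
    apply Finset.sum_subset (Finset.range_subset_range.2 hqn)
    intro i hi hni
    rw [mem_range] at hi hni
    have h1 := card_types_filter_lin k G i
    have h2 : n - 1 < i * k := by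
      calc n - 1 = k * q + r := hdm.symm
        _ < k * (q + 1) := by rw [Nat.mul_succ]; omega
        _ ≤ k * i := Nat.mul_le_mul_left k (by omega)
        _ = i * k := Nat.mul_comm k i
    omega
  have hlast : ((types k G).filter fun p => p.1 = q).card ≤ r := by
    have h1 := card_types_filter_lin k G q
    have hqk : k * q = q * k := Nat.mul_comm k q
    omega
  have hM : (types k G).card ≤ q * (2 ^ k - 1) + r := by
    rw [hsum, htrunc, Finset.sum_range_succ]
    have h1 : ∑ i ∈ Finset.range q, ((types k G).filter fun p => p.1 = i).card
        ≤ ∑ _i ∈ Finset.range q, (2 ^ k - 1) :=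
      Finset.sum_le_sum fun i _ => card_types_filter_pow k G hk i
    rw [Finset.sum_const, card_range, smul_eq_mul] at h1
    omega
  have h2k : k < 2 ^ k := Nat.lt_two_pow_self
  have h1 : 1 ≤ 2 ^ k := Nat.one_le_two_pow
  set s := 2 ^ k - 1 with hs
  have hs1 : 2 ^ k = s + 1 := by omega
  have hks : k ≤ s := by omega
  have hn2 : n = k * q + r + 1 := by omega
  calc (types k G).card * k ≤ (q * s + r) * k := Nat.mul_le_mul_right k hM
    _ = q * s * k + r * k := by ring
    _ ≤ q * s * k + r * s := by
        have : r * k ≤ r * s := Nat.mul_le_mul_left r hks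
        omega
    _ < (s + 1) * (k * q + r + 1) := by nlinarith
    _ = 2 ^ k * n := by rw [← hs1, ← hn2]

lemma card_partA (hk : 1 ≤ k) (v : Fin n) :
    ((types k G).filter fun p => v ∈ p.2).card ≤ 2 ^ (k - 1) := by
  classical
  have hvK : v ∈ Kclass (n := n) k ((v : ℕ) / k) := by simp [Kclass]
  have key : ∀ p ∈ (types k G).filter fun p => v ∈ p.2,
      p.1 = (v : ℕ) / k ∧ p.2 ⊆ Kclass (n := n) k ((v : ℕ) / k) := by
    intro p hp
    rw [mem_filter] at hp
    obtain ⟨hp1, hp2⟩ := hp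
    obtain ⟨w, -, -, h3⟩ := (mem_types k G).1 hp1
    have hv : v ∈ tset k G w p.1 := by rw [h3]; exact hp2
    rw [mem_tset] at hv
    refine ⟨hv.2.2.symm, ?_⟩
    intro u hu
    rw [← h3, mem_tset] at hu
    rw [mem_Kclass, hu.2.2, hv.2.2]
  have h1 : ((types k G).filter fun p => v ∈ p.2).card ≤
      ((Kclass (n := n) k ((v : ℕ) / k)).erase v).powerset.card := by
    refine card_le_card_of_injOn (fun p => p.2.erase v) ?_ ?_
    · intro p hp
      obtain ⟨-, hsub⟩ := key p hp
      rw [mem_coe, mem_powerset]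
      exact erase_subset_erase v hsub
    · intro p hp p' hp' h
      rw [mem_coe] at hp hp'
      have h1 := key p hp
      have h2 := key p' hp'
      rw [mem_filter] at hp hp'
      have h' : p.2.erase v = p'.2.erase v := h
      have hS : p.2 = p'.2 := by
        rw [← insert_erase hp.2, ← insert_erase hp'.2, h']
      exact Prod.ext (h1.1.trans h2.1.symm) hS
  refine h1.trans ?_
  rw [card_powerset]
  apply Nat.pow_le_pow_right (by norm_num)
  rw [card_erase_of_mem hvK]
  have := card_Kclass_le (n := n) k hk ((v : ℕ) / k)
  omega

lemma card_partB (v : Fin n) :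
    ((types k G).filter fun p => tset k G v p.1 = p.2).card ≤ (v : ℕ) / k + 1 := by
  classical
  have h1 : ((types k G).filter fun p => tset k G v p.1 = p.2).card ≤
      (Finset.range ((v : ℕ) / k + 1)).card := by
    refine card_le_card_of_injOn (Prod.fst) ?_ ?_
    · intro p hp
      simp only [mem_coe, mem_filter] at hp
      obtain ⟨hp1, hp2⟩ := hp
      obtain ⟨w, -, h2, h3⟩ := (mem_types k G).1 hp1
      have hne : (tset k G v p.1).Nonempty := by rw [hp2, ← h3]; exact h2
      obtain ⟨u, hu⟩ := hne
      rw [mem_tset] at hu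
      rw [mem_coe, mem_range]
      have : (u : ℕ) / k ≤ (v : ℕ) / k := Nat.div_le_div_right (le_of_lt hu.2.1)
      omega
    · intro p hp p' hp' h
      simp only [mem_coe, mem_filter] at hp hp'
      have h' : p.1 = p'.1 := h
      refine Prod.ext h' ?_
      rw [← hp.2, ← hp'.2, h']
  simpa using h1

end LemmaKAux


/-- **Lemma (integer part).**  Let `G` be a graph on `n` vertices and `1 ≤ k ≤ n`.
There is a partition of the edge set of `G` into the edge sets of fewer than
`2^k · n / k` complete bipartite subgraphs of `G` such that every vertex is
contained in at most `2^(k-1) + ⌈n/k⌉` of these subgraphs. -/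
theorem lemma_k_integer (n k : ℕ) (hk1 : 1 ≤ k) (hkn : k ≤ n)
    (G : SimpleGraph (Fin n)) :
    ∃ (M : ℕ) (f : Fin M → CBSub G),
      ((M : ℝ) < 2 ^ k * n / k) ∧
      (∀ e ∈ G.edgeSet, ∃! i : Fin M, e ∈ (f i).edges) ∧
      ∀ v : Fin n,
        (Finset.univ.filter fun i : Fin M => v ∈ (f i).verts).card ≤
          2 ^ (k - 1) + ⌈(n : ℝ) / k⌉₊ := by
  classical
  set T := LemmaKAux.types k G with hT
  let eqT : {x // x ∈ T} ≃ Fin T.card := T.equivFin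
  refine ⟨T.card, fun j => LemmaKAux.toCBSub k G (eqT.symm j).1 (eqT.symm j).2, ?_, ?_, ?_⟩
  · -- counting bound
    have hkpos : (0 : ℝ) < (k : ℝ) := by exact_mod_cast hk1
    rw [lt_div_iff₀ hkpos]
    have h := LemmaKAux.card_types_mul_lt k G hk1 hkn
    exact_mod_cast h
  · -- partition of edges
    have key : ∀ a b : Fin n, G.Adj a b → a < b →
        ∃! j : Fin T.card, s(a, b) ∈
          (LemmaKAux.toCBSub k G (eqT.symm j).1 (eqT.symm j).2).edges := by
      intro a b hadj hlt
      have hin : (a : ℕ) / k < n := lt_of_le_of_lt (Nat.div_le_self _ _) a.isLt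
      have hp0 : ((a : ℕ) / k, LemmaKAux.tset k G b ((a : ℕ) / k)) ∈ T :=
        (LemmaKAux.mem_types k G).2
          ⟨b, hin, ⟨a, (LemmaKAux.mem_tset k G).2 ⟨hadj, hlt, rfl⟩⟩, rfl⟩
      refine ⟨eqT ⟨_, hp0⟩, ?_, ?_⟩
      · have hx : eqT.symm (eqT ⟨_, hp0⟩) = ⟨_, hp0⟩ := eqT.symm_apply_apply _
        exact (LemmaKAux.edge_mem_iff k G (eqT.symm (eqT ⟨_, hp0⟩)).2 hlt hadj).2
          (congrArg Subtype.val hx)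
      · intro j hj
        have h1 := (LemmaKAux.edge_mem_iff k G (eqT.symm j).2 hlt hadj).1 hj
        have h2 : eqT.symm j = ⟨_, hp0⟩ := Subtype.ext h1
        calc j = eqT (eqT.symm j) := (eqT.apply_symm_apply j).symm
          _ = eqT ⟨_, hp0⟩ := by rw [h2]
    intro e he
    induction e using Sym2.ind with
    | _ a b =>
      rw [SimpleGraph.mem_edgeSet] at he
      rcases lt_or_gt_of_ne (G.ne_of_adj he) with hlt | hgt
      · exact key a b he hlt
      · rw [Sym2.eq_swap]
        exact key b a he.symm hgt
  · -- vertex bound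
    intro v
    have h1 : (Finset.univ.filter fun j : Fin T.card =>
          v ∈ (LemmaKAux.toCBSub k G (eqT.symm j).1 (eqT.symm j).2).verts).card ≤
        (T.filter fun p => v ∈ p.2 ∨ LemmaKAux.tset k G v p.1 = p.2).card := by
      refine Finset.card_le_card_of_injOn (fun j => ((eqT.symm j) : ℕ × Finset (Fin n))) ?_ ?_
      · intro j hj
        rw [mem_coe, mem_filter] at hj
        refine mem_filter.2 ⟨(eqT.symm j).2, ?_⟩
        exact (LemmaKAux.verts_toCBSub k G (eqT.symm j).2).1 hj.2
      · intro j hj j' hj' h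
        have h' : ((eqT.symm j) : ℕ × Finset (Fin n)) = ((eqT.symm j') : ℕ × Finset (Fin n)) := h
        exact eqT.symm.injective (Subtype.ext h')
    have h2 : (T.filter fun p => v ∈ p.2 ∨ LemmaKAux.tset k G v p.1 = p.2).card ≤
        (T.filter fun p => v ∈ p.2).card +
        (T.filter fun p => LemmaKAux.tset k G v p.1 = p.2).card := by
      rw [filter_or]
      exact card_union_le _ _
    have h3 : (T.filter fun p => v ∈ p.2).card ≤ 2 ^ (k - 1) := by
      rw [hT]; exact LemmaKAux.card_partA k G hk1 v
    have h4 : (T.filter fun p => LemmaKAux.tset k G v p.1 = p.2).card ≤ (v : ℕ) / k + 1 := by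
      rw [hT]; exact LemmaKAux.card_partB k G v
    have h5 : (v : ℕ) / k + 1 ≤ ⌈(n : ℝ) / k⌉₊ := by
      rw [Nat.add_one_le_iff, Nat.lt_ceil]
      have hkpos : (0 : ℝ) < (k : ℝ) := by exact_mod_cast hk1
      rw [lt_div_iff₀ hkpos]
      have ha : (v : ℕ) / k * k ≤ (v : ℕ) := Nat.div_mul_le_self _ _
      have hb := v.isLt
      exact_mod_cast (show ((v : ℕ) / k) * k < n by omega)
    exact le_trans (le_trans h1 h2) (add_le_add h3 (le_trans h4 h5))
end

section
/- Let G be a finite simple graph on n vertices and let k be an integer with 1 ≤ k ≤ n. Then there exists a fractional CB-partition of G using fewer than 2^k·n/k complete bipartite subgraphs of G, each with weight 1/2 or 1, such that the load of every vertex is at most 2^(k−2) + ⌈n/k⌉/2. -/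
namespace LKAux

open Finset

variable {n : ℕ}

/-- number of blocks -/
def m (n k : ℕ) : ℕ := (n + k - 1) / k

/-- block i -/
def blk (n k i : ℕ) : Finset (Fin n) := univ.filter (fun v => v.val / k = i)

open Classical in
/-- neighbors of u inside block i -/
noncomputable def nbh (k : ℕ) (G : SimpleGraph (Fin n)) (i : ℕ) (u : Fin n) : Finset (Fin n) :=
  univ.filter (fun a => G.Adj u a ∧ a.val / k = i)

open Classical in
noncomputable def RR (k : ℕ) (G : SimpleGraph (Fin n)) (i : ℕ) (A : Finset (Fin n)) :
    Finset (Fin n) :=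
  univ.filter (fun u => nbh k G i u = A)

open Classical in
noncomputable def SS (k : ℕ) (G : SimpleGraph (Fin n)) (i : ℕ) : Finset (Finset (Fin n)) :=
  (univ.image (nbh k G i)).filter Finset.Nonempty

noncomputable def T (k : ℕ) (G : SimpleGraph (Fin n)) : Finset (ℕ × Finset (Fin n)) :=
  (range (m n k)).biUnion (fun i => (SS k G i).image (fun A => (i, A)))

variable {k : ℕ} {G : SimpleGraph (Fin n)}

lemma mem_blk {v : Fin n} {i : ℕ} : v ∈ blk n k i ↔ v.val / k = i := by
  simp [blk]

lemma mem_nbh {a u : Fin n} {i : ℕ} : a ∈ nbh k G i u ↔ G.Adj u a ∧ a.val / k = i := by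
  simp [nbh]

lemma mem_RR {u : Fin n} {i : ℕ} {A : Finset (Fin n)} :
    u ∈ RR k G i A ↔ nbh k G i u = A := by
  simp [RR]

lemma mem_SS {i : ℕ} {A : Finset (Fin n)} :
    A ∈ SS k G i ↔ (∃ u, nbh k G i u = A) ∧ A.Nonempty := by
  simp [SS]

lemma mem_T {p : ℕ × Finset (Fin n)} :
    p ∈ T k G ↔ p.1 < m n k ∧ p.2 ∈ SS k G p.1 := by
  obtain ⟨i, A⟩ := p
  simp only [T, mem_biUnion, mem_range, mem_image, Prod.mk.injEq]
  constructor
  · rintro ⟨j, hj, B, hB, rfl, rfl⟩; exact ⟨hj, hB⟩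
  · rintro ⟨h1, h2⟩; exact ⟨i, h1, A, h2, rfl, rfl⟩

lemma nbh_subset {i : ℕ} {u : Fin n} : nbh k G i u ⊆ blk n k i := by
  intro a ha; rw [mem_nbh] at ha; rw [mem_blk]; exact ha.2

lemma SS_subset {i : ℕ} {A : Finset (Fin n)} (h : A ∈ SS k G i) : A ⊆ blk n k i := by
  obtain ⟨⟨u, rfl⟩, -⟩ := mem_SS.mp h
  exact nbh_subset

/-- the biclique associated to an element of T -/
noncomputable def mkCB (p : ℕ × Finset (Fin n)) (hp : p ∈ T k G) : CBSub G where
  A := p.2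
  B := RR k G p.1 p.2
  nonemptyA := (mem_SS.mp (mem_T.mp hp).2).2
  nonemptyB := by
    obtain ⟨⟨u, hu⟩, -⟩ := mem_SS.mp (mem_T.mp hp).2
    exact ⟨u, mem_RR.mpr hu⟩
  disjointAB := by
    rw [Finset.disjoint_left]
    intro a haA haR
    rw [mem_RR] at haR
    rw [← haR, mem_nbh] at haA
    exact G.irrefl haA.1
  adj := by
    intro a haA b hbR
    rw [mem_RR] at hbR
    have : a ∈ nbh k G p.1 b := by rw [hbR]; exact haA
    exact ((mem_nbh.mp this).1).symm

lemma edges_mkCB {p : ℕ × Finset (Fin n)} (hp : p ∈ T k G) {u v : Fin n} :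
    s(u, v) ∈ (mkCB p hp).edges ↔
      (u ∈ p.2 ∧ v ∈ RR k G p.1 p.2) ∨ (v ∈ p.2 ∧ u ∈ RR k G p.1 p.2) := by
  simp only [CBSub.edges, mkCB, mem_image, mem_product, Prod.exists]
  constructor
  · rintro ⟨a, b, ⟨ha, hb⟩, hab⟩
    rw [Sym2.eq_iff] at hab
    rcases hab with ⟨rfl, rfl⟩ | ⟨rfl, rfl⟩
    · exact Or.inl ⟨ha, hb⟩
    · exact Or.inr ⟨ha, hb⟩
  · rintro (⟨h1, h2⟩ | ⟨h1, h2⟩)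
    · exact ⟨u, v, ⟨h1, h2⟩, rfl⟩
    · exact ⟨v, u, ⟨h1, h2⟩, by rw [Sym2.eq_swap]⟩

lemma verts_mkCB {p : ℕ × Finset (Fin n)} (hp : p ∈ T k G) {v : Fin n} :
    v ∈ (mkCB p hp).verts ↔ v ∈ p.2 ∨ v ∈ RR k G p.1 p.2 := by
  simp [CBSub.verts, mkCB]

lemma blk_card_le (hk : 1 ≤ k) (i : ℕ) : (blk n k i : Finset (Fin n)).card ≤ k := by
  have h : (blk n k i : Finset (Fin n)).card ≤ (range k).card := by
    apply Finset.card_le_card_of_injOn (fun v => v.val % k)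
    · intro v _; rw [Finset.mem_coe, mem_range]; exact Nat.mod_lt _ hk
    · intro a ha b hb hab
      simp only [Finset.mem_coe, mem_blk] at ha hb
      simp only at hab
      apply Fin.ext
      calc a.val = k * (a.val / k) + a.val % k := (Nat.div_add_mod _ _).symm
        _ = k * (b.val / k) + b.val % k := by rw [ha, hb, hab]
        _ = b.val := Nat.div_add_mod _ _
  simpa using h

lemma blk_card_le_sub (j : ℕ) : (blk n k j : Finset (Fin n)).card ≤ n - j * k := by
  have h : (blk n k j : Finset (Fin n)).card ≤ (range (n - j * k)).card := by
    apply Finset.card_le_card_of_injOn (fun v => v.val - j * k)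
    · intro v hv
      simp only [Finset.mem_coe, mem_blk] at hv
      have h1 : (v.val / k) * k ≤ v.val := Nat.div_mul_le_self _ _
      rw [hv] at h1
      have h2 : v.val < n := v.isLt
      rw [Finset.mem_coe, mem_range]
      simp only
      omega
    · intro a ha b hb hab
      simp only [Finset.mem_coe, mem_blk] at ha hb
      have h1 : (a.val / k) * k ≤ a.val := Nat.div_mul_le_self _ _
      have h2 : (b.val / k) * k ≤ b.val := Nat.div_mul_le_self _ _
      rw [ha] at h1; rw [hb] at h2
      simp only at hab
      apply Fin.ext
      omega
  simpa using h

lemma card_SS_le (i : ℕ) : (SS k G i).card ≤ 2 ^ (blk n k i : Finset (Fin n)).card - 1 := by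
  have hsub : SS k G i ⊆ ((blk n k i : Finset (Fin n)).powerset).erase ∅ := by
    intro A hA
    rw [Finset.mem_erase, Finset.mem_powerset]
    exact ⟨(mem_SS.mp hA).2.ne_empty, SS_subset hA⟩
  calc (SS k G i).card ≤ _ := Finset.card_le_card hsub
    _ = 2 ^ (blk n k i : Finset (Fin n)).card - 1 := by
        rw [Finset.card_erase_of_mem (Finset.empty_mem_powerset _), Finset.card_powerset]

lemma card_T_eq : (T k G).card = ∑ i ∈ range (m n k), (SS k G i).card := by
  rw [T, Finset.card_biUnion]
  · apply Finset.sum_congr rfl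
    intro i _
    exact Finset.card_image_of_injective _ (fun A B h => by simpa using h)
  · intro i _ j _ hij
    rw [Function.onFun, Finset.disjoint_left]
    rintro p hp hq
    simp only [Finset.mem_image] at hp hq
    obtain ⟨A, -, rfl⟩ := hp
    obtain ⟨B, -, hB⟩ := hq
    exact hij (congrArg Prod.fst hB).symm

lemma m_facts (hk : 1 ≤ k) (hkn : k ≤ n) :
    n ≤ m n k * k ∧ (m n k - 1) * k < n ∧ 1 ≤ m n k := by
  have h1 := Nat.div_add_mod (n + k - 1) k
  have h2 : (n + k - 1) % k < k := Nat.mod_lt _ hk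
  rw [m]
  set q := (n + k - 1) / k with hq
  set r := (n + k - 1) % k with hr
  have e1 : q * k = k * q := Nat.mul_comm _ _
  have e2 : (q - 1) * k = q * k - k := by rw [Nat.sub_mul, one_mul]
  set P := k * q with hP
  refine ⟨by omega, by omega, ?_⟩
  rcases Nat.eq_zero_or_pos q with hq0 | hq0
  · rw [hq0, Nat.mul_zero] at hP; omega
  · omega

lemma two_pow_mono_mul (a b : ℕ) (h1 : 1 ≤ a) (hab : a ≤ b) : b * 2 ^ a ≤ a * 2 ^ b := by
  set d := b - a with hd
  have hb : b = a + d := by omega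
  rw [hb, pow_add]
  have h2 : d + 1 ≤ 2 ^ d := Nat.lt_two_pow_self (n := d)
  have h3 : a + d ≤ a * (d + 1) := by
    have := Nat.le_mul_of_pos_left d h1
    nlinarith
  calc (a + d) * 2 ^ a ≤ (a * (d + 1)) * 2 ^ a := Nat.mul_le_mul_right _ h3
    _ ≤ (a * 2 ^ d) * 2 ^ a := Nat.mul_le_mul_right _ (Nat.mul_le_mul_left _ h2)
    _ = a * (2 ^ a * 2 ^ d) := by ring

lemma count_main (hk : 1 ≤ k) (hkn : k ≤ n) : k * (T k G).card < 2 ^ k * n := by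
  obtain ⟨hA, hB, hC⟩ := m_facts (n := n) hk hkn
  set mm := m n k with hmm
  have e3 : (mm - 1) * k + k = mm * k := by
    calc (mm - 1) * k + k = ((mm - 1) + 1) * k := by ring
      _ = mm * k := by rw [Nat.sub_add_cancel hC]
  set k' := n - (mm - 1) * k with hk'
  have hk'1 : 1 ≤ k' := by omega
  have hk'k : k' ≤ k := by omega
  have hn : n = (mm - 1) * k + k' := by omega
  have hTcard : (T k G).card ≤ (mm - 1) * (2 ^ k - 1) + (2 ^ k' - 1) := by
    rw [card_T_eq, ← hmm]
    have hsplit : mm = (mm - 1) + 1 := by omega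
    rw [hsplit, Finset.sum_range_succ]
    simp only [Nat.add_sub_cancel]
    apply Nat.add_le_add
    · calc ∑ i ∈ range (mm - 1), (SS k G i).card
          ≤ ∑ _i ∈ range (mm - 1), (2 ^ k - 1) := by
            apply Finset.sum_le_sum
            intro i _
            calc (SS k G i).card ≤ 2 ^ (blk n k i : Finset (Fin n)).card - 1 := card_SS_le i
              _ ≤ 2 ^ k - 1 := by
                  have h1 := blk_card_le (n := n) hk i
                  have h2 := Nat.pow_le_pow_right (by norm_num : 1 ≤ 2) h1
                  omega
        _ = (mm - 1) * (2 ^ k - 1) := by rw [Finset.sum_const, card_range, smul_eq_mul]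
    · calc (SS k G (mm - 1)).card
          ≤ 2 ^ (blk n k (mm - 1) : Finset (Fin n)).card - 1 := card_SS_le _
        _ ≤ 2 ^ k' - 1 := by
            have h1 := blk_card_le_sub (n := n) (k := k) (mm - 1)
            rw [← hk'] at h1
            have h2 := Nat.pow_le_pow_right (by norm_num : 1 ≤ 2) h1
            omega
  have hmono : k * 2 ^ k' ≤ k' * 2 ^ k := two_pow_mono_mul k' k hk'1 hk'k
  have hP1 : 1 ≤ 2 ^ k := Nat.one_le_two_pow
  have hQ1 : 1 ≤ 2 ^ k' := Nat.one_le_two_pow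
  set P := 2 ^ k with hP
  set Q := 2 ^ k' with hQ
  set m1 := mm - 1 with hm1v
  calc k * (T k G).card ≤ k * (m1 * (P - 1) + (Q - 1)) := Nat.mul_le_mul_left _ hTcard
    _ < P * n := by
        obtain ⟨P1, hPe⟩ : ∃ P1, P = P1 + 1 := ⟨P - 1, by omega⟩
        obtain ⟨Q1, hQe⟩ : ∃ Q1, Q = Q1 + 1 := ⟨Q - 1, by omega⟩
        have hmono' : k * Q1 + k ≤ k' * P1 + k' := by
          rw [hPe, hQe] at hmono
          simp only [Nat.mul_add, Nat.mul_one] at hmono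
          omega
        rw [hn, hPe, hQe]
        simp only [Nat.add_sub_cancel]
        nlinarith [Nat.zero_le (m1 * k), Nat.zero_le (P1 * (m1 * k))]


noncomputable def edgesOf (k : ℕ) (G : SimpleGraph (Fin n)) (p : ℕ × Finset (Fin n)) :
    Finset (Sym2 (Fin n)) :=
  (p.2 ×ˢ RR k G p.1 p.2).image fun ab => s(ab.1, ab.2)

noncomputable def vertsOf (k : ℕ) (G : SimpleGraph (Fin n)) (p : ℕ × Finset (Fin n)) :
    Finset (Fin n) :=
  p.2 ∪ RR k G p.1 p.2

lemma mkCB_edges {p : ℕ × Finset (Fin n)} (hp : p ∈ T k G) :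
    (mkCB p hp).edges = edgesOf k G p := rfl

lemma mkCB_verts {p : ℕ × Finset (Fin n)} (hp : p ∈ T k G) :
    (mkCB p hp).verts = vertsOf k G p := rfl

lemma mem_edgesOf {p : ℕ × Finset (Fin n)} {u v : Fin n} :
    s(u, v) ∈ edgesOf k G p ↔
      (u ∈ p.2 ∧ v ∈ RR k G p.1 p.2) ∨ (v ∈ p.2 ∧ u ∈ RR k G p.1 p.2) := by
  simp only [edgesOf, mem_image, mem_product, Prod.exists]
  constructor
  · rintro ⟨a, b, ⟨ha, hb⟩, hab⟩
    rw [Sym2.eq_iff] at hab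
    rcases hab with ⟨rfl, rfl⟩ | ⟨rfl, rfl⟩
    · exact Or.inl ⟨ha, hb⟩
    · exact Or.inr ⟨ha, hb⟩
  · rintro (⟨h1, h2⟩ | ⟨h1, h2⟩)
    · exact ⟨u, v, ⟨h1, h2⟩, rfl⟩
    · exact ⟨v, u, ⟨h1, h2⟩, by rw [Sym2.eq_swap]⟩

lemma mem_vertsOf {p : ℕ × Finset (Fin n)} {v : Fin n} :
    v ∈ vertsOf k G p ↔ v ∈ p.2 ∨ v ∈ RR k G p.1 p.2 := by
  simp [vertsOf]

lemma card_filter_univ (Q : ℕ × Finset (Fin n) → Prop) [DecidablePred Q] :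
    (univ.filter fun j : Fin (T k G).card =>
        Q ((T k G).equivFin.symm j : ℕ × Finset (Fin n))).card
      = ((T k G).filter Q).card := by
  apply Finset.card_bij (fun j _ => ((T k G).equivFin.symm j : ℕ × Finset (Fin n)))
  · intro a ha
    rw [Finset.mem_filter] at ha ⊢
    exact ⟨((T k G).equivFin.symm a).2, ha.2⟩
  · intro a _ b _ h
    exact (T k G).equivFin.symm.injective (Subtype.coe_injective h)
  · intro p hp
    rw [Finset.mem_filter] at hp
    refine ⟨(T k G).equivFin ⟨p, hp.1⟩, ?_, ?_⟩
    · rw [Finset.mem_filter]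
      refine ⟨Finset.mem_univ _, ?_⟩
      rw [Equiv.symm_apply_apply]
      exact hp.2
    · rw [Equiv.symm_apply_apply]

lemma card_filter_univ_edge (u v : Fin n) :
    (univ.filter fun j : Fin (T k G).card =>
        s(u, v) ∈ edgesOf k G ((T k G).equivFin.symm j : ℕ × Finset (Fin n))).card
      = ((T k G).filter (fun p => s(u, v) ∈ edgesOf k G p)).card :=
  card_filter_univ (fun p => s(u, v) ∈ edgesOf k G p)

lemma card_filter_univ_vert (v : Fin n) :
    (univ.filter fun j : Fin (T k G).card =>
        v ∈ vertsOf k G ((T k G).equivFin.symm j : ℕ × Finset (Fin n))).card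
      = ((T k G).filter (fun p => v ∈ vertsOf k G p)).card :=
  card_filter_univ (fun p => v ∈ vertsOf k G p)

lemma filter_edge (hk : 1 ≤ k) (hkn : k ≤ n) {u v : Fin n} (huv : G.Adj u v) :
    (T k G).filter (fun p => s(u, v) ∈ edgesOf k G p) =
      {(u.val / k, nbh k G (u.val / k) v), (v.val / k, nbh k G (v.val / k) u)} := by
  obtain ⟨hA, hB, hC⟩ := m_facts (n := n) hk hkn
  have hdiv : ∀ w : Fin n, w.val / k < m n k := by
    intro w
    rw [Nat.div_lt_iff_lt_mul hk]
    exact lt_of_lt_of_le w.isLt hA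
  have hmemT : ∀ (a b : Fin n), G.Adj a b → (a.val / k, nbh k G (a.val / k) b) ∈ T k G := by
    intro a b hab
    rw [mem_T]
    refine ⟨hdiv a, mem_SS.mpr ⟨⟨b, rfl⟩, ⟨a, mem_nbh.mpr ⟨hab.symm, rfl⟩⟩⟩⟩
  have hmemE : ∀ (a b : Fin n) (hab : G.Adj a b),
      s(a, b) ∈ edgesOf k G (a.val / k, nbh k G (a.val / k) b) := by
    intro a b hab
    rw [mem_edgesOf]
    exact Or.inl ⟨mem_nbh.mpr ⟨hab.symm, rfl⟩, mem_RR.mpr rfl⟩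
  ext p
  rw [Finset.mem_filter, Finset.mem_insert, Finset.mem_singleton]
  constructor
  · rintro ⟨hpT, hpe⟩
    obtain ⟨hm, hSS⟩ := mem_T.mp hpT
    have hsub := SS_subset hSS
    rw [mem_edgesOf] at hpe
    rcases hpe with ⟨h1, h2⟩ | ⟨h1, h2⟩
    · left
      have h3 : u.val / k = p.1 := mem_blk.mp (hsub h1)
      have h4 : nbh k G p.1 v = p.2 := mem_RR.mp h2
      rw [← h3] at h4
      exact Prod.ext h3.symm h4.symm
    · right
      have h3 : v.val / k = p.1 := mem_blk.mp (hsub h1)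
      have h4 : nbh k G p.1 u = p.2 := mem_RR.mp h2
      rw [← h3] at h4
      exact Prod.ext h3.symm h4.symm
  · rintro (rfl | rfl)
    · exact ⟨hmemT u v huv, hmemE u v huv⟩
    · refine ⟨hmemT v u huv.symm, ?_⟩
      rw [Sym2.eq_swap]
      exact hmemE v u huv.symm

lemma card_filter_edge (hk : 1 ≤ k) (hkn : k ≤ n) {u v : Fin n} (huv : G.Adj u v) :
    ((T k G).filter (fun p => s(u, v) ∈ edgesOf k G p)).card = 2 := by
  rw [filter_edge hk hkn huv]
  apply Finset.card_pair
  intro hcontra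
  rw [Prod.ext_iff] at hcontra
  obtain ⟨h1, h2⟩ := hcontra
  simp only at h1 h2
  have hu : u ∈ nbh k G (u.val / k) v := mem_nbh.mpr ⟨huv.symm, rfl⟩
  rw [h2] at hu
  exact G.irrefl (mem_nbh.mp hu).1

lemma card_filter_vert (hk : 1 ≤ k) (v : Fin n) :
    ((T k G).filter (fun p => v ∈ vertsOf k G p)).card ≤ 2 ^ (k - 1) + m n k := by
  have hsub : (T k G).filter (fun p => v ∈ vertsOf k G p) ⊆
      ((T k G).filter (fun p => v ∈ p.2)) ∪ ((T k G).filter (fun p => v ∈ RR k G p.1 p.2)) := by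
    intro p hp
    rw [Finset.mem_filter] at hp
    rw [Finset.mem_union, Finset.mem_filter, Finset.mem_filter]
    rcases mem_vertsOf.mp hp.2 with h | h
    · exact Or.inl ⟨hp.1, h⟩
    · exact Or.inr ⟨hp.1, h⟩
  have h1 : ((T k G).filter (fun p => v ∈ p.2)).card ≤ 2 ^ (k - 1) := by
    have hmap : ((T k G).filter (fun p => v ∈ p.2)).card ≤
        (((blk n k (v.val / k) : Finset (Fin n)).erase v).powerset).card := by
      apply Finset.card_le_card_of_injOn (fun p => p.2.erase v)
      · intro p hp
        simp only [Finset.mem_coe, Finset.mem_filter] at hp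
        obtain ⟨hpT, hv⟩ := hp
        obtain ⟨-, hSS⟩ := mem_T.mp hpT
        have hsub2 := SS_subset hSS
        have hblk : v.val / k = p.1 := mem_blk.mp (hsub2 hv)
        rw [Finset.mem_coe, Finset.mem_powerset]
        intro a ha
        rw [Finset.mem_erase] at ha ⊢
        refine ⟨ha.1, ?_⟩
        rw [hblk]
        exact hsub2 ha.2
      · intro p hp q hq hpq
        simp only [Finset.mem_coe, Finset.mem_filter] at hp hq
        obtain ⟨hpT, hv⟩ := hp
        obtain ⟨hqT, hv'⟩ := hq
        have hblkp : v.val / k = p.1 := mem_blk.mp (SS_subset (mem_T.mp hpT).2 hv)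
        have hblkq : v.val / k = q.1 := mem_blk.mp (SS_subset (mem_T.mp hqT).2 hv')
        simp only at hpq
        apply Prod.ext
        · rw [← hblkp, ← hblkq]
        · rw [← Finset.insert_erase hv, ← Finset.insert_erase hv', hpq]
    calc ((T k G).filter (fun p => v ∈ p.2)).card
        ≤ _ := hmap
      _ = 2 ^ ((blk n k (v.val / k) : Finset (Fin n)).erase v).card := Finset.card_powerset _
      _ ≤ 2 ^ (k - 1) := by
          apply Nat.pow_le_pow_right (by norm_num)
          have hvb : v ∈ blk n k (v.val / k) := mem_blk.mpr rfl
          have := Finset.card_erase_of_mem hvb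
          have hb := blk_card_le (n := n) hk (v.val / k)
          omega
  have h2 : ((T k G).filter (fun p => v ∈ RR k G p.1 p.2)).card ≤ m n k := by
    have hmap : ((T k G).filter (fun p => v ∈ RR k G p.1 p.2)).card ≤ (range (m n k)).card := by
      apply Finset.card_le_card_of_injOn (fun p => p.1)
      · intro p hp
        simp only [Finset.mem_coe, Finset.mem_filter] at hp
        rw [Finset.mem_coe, mem_range]
        exact (mem_T.mp hp.1).1
      · intro p hp q hq hpq
        simp only [Finset.mem_coe, Finset.mem_filter] at hp hq
        have hp2 := mem_RR.mp hp.2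
        have hq2 := mem_RR.mp hq.2
        simp only at hpq
        apply Prod.ext hpq
        rw [← hp2, ← hq2, hpq]
    simpa using hmap
  calc ((T k G).filter (fun p => v ∈ vertsOf k G p)).card
      ≤ _ := Finset.card_le_card hsub
    _ ≤ _ := Finset.card_union_le _ _
    _ ≤ 2 ^ (k - 1) + m n k := Nat.add_le_add h1 h2

end LKAux

/-- **Lemma (fractional part).**  Let `G` be a graph on `n` vertices and
`1 ≤ k ≤ n`.  There is a fractional CB-partition of `G` using fewer than
`2^k · n / k` complete bipartite subgraphs of `G`, each with weight `1/2` or `1`,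
such that the load of every vertex is at most `2^(k-2) + ⌈n/k⌉ / 2`. -/
theorem lemma_k_fractional (n k : ℕ) (hk1 : 1 ≤ k) (hkn : k ≤ n)
    (G : SimpleGraph (Fin n)) :
    ∃ (M : ℕ) (f : Fin M → CBSub G) (w : Fin M → ℝ),
      ((M : ℝ) < 2 ^ k * n / k) ∧
      (∀ i, w i = 1 / 2 ∨ w i = 1) ∧
      (∀ e ∈ G.edgeSet,
        ∑ i ∈ Finset.univ.filter (fun i : Fin M => e ∈ (f i).edges), w i = 1) ∧
      ∀ v : Fin n,
        ∑ i ∈ Finset.univ.filter (fun i : Fin M => v ∈ (f i).verts), w i ≤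
          (2 : ℝ) ^ ((k : ℤ) - 2) + (⌈(n : ℝ) / k⌉₊ : ℝ) / 2 := by
  classical
  set TT := LKAux.T k G with hTT
  refine ⟨TT.card,
    fun j => LKAux.mkCB (TT.equivFin.symm j : ℕ × Finset (Fin n))
      (TT.equivFin.symm j).2,
    fun _ => 1 / 2, ?_, fun i => Or.inl rfl, ?_, ?_⟩
  · -- count
    have h := LKAux.count_main (k := k) (G := G) hk1 hkn
    have hk0 : (0 : ℝ) < (k : ℝ) := by exact_mod_cast hk1
    rw [lt_div_iff₀ hk0]
    calc (TT.card : ℝ) * k = (k * TT.card : ℕ) := by push_cast; ring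
      _ < ((2 ^ k * n : ℕ) : ℝ) := by exact_mod_cast h
      _ = 2 ^ k * n := by push_cast; ring
  · -- edges
    intro e he
    induction e with
    | _ u v =>
      have huv : G.Adj u v := he
      have hfe : (Finset.univ.filter (fun j : Fin TT.card =>
            s(u, v) ∈ (LKAux.mkCB (TT.equivFin.symm j : ℕ × Finset (Fin n))
              (TT.equivFin.symm j).2).edges))
          = Finset.univ.filter (fun j : Fin TT.card =>
            s(u, v) ∈ LKAux.edgesOf k G (TT.equivFin.symm j : ℕ × Finset (Fin n))) := by
        apply Finset.filter_congr
        intro x _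
        rw [LKAux.mkCB_edges]
      rw [hfe, hTT, Finset.sum_const, LKAux.card_filter_univ_edge,
        LKAux.card_filter_edge hk1 hkn huv]
      norm_num
  · -- loads
    intro v
    have hfe : (Finset.univ.filter (fun j : Fin TT.card =>
          v ∈ (LKAux.mkCB (TT.equivFin.symm j : ℕ × Finset (Fin n))
            (TT.equivFin.symm j).2).verts))
        = Finset.univ.filter (fun j : Fin TT.card =>
          v ∈ LKAux.vertsOf k G (TT.equivFin.symm j : ℕ × Finset (Fin n))) := by
      apply Finset.filter_congr
      intro x _
      rw [LKAux.mkCB_verts]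
    rw [hfe, hTT, Finset.sum_const, LKAux.card_filter_univ_vert]
    have hcard := LKAux.card_filter_vert (G := G) hk1 v
    have hm := LKAux.m_facts (n := n) (k := k) hk1 hkn
    -- m ≤ ceil
    have hmceil : (LKAux.m n k : ℝ) ≤ (⌈(n : ℝ) / k⌉₊ : ℝ) := by
      have hk0 : (0 : ℝ) < (k : ℝ) := by exact_mod_cast hk1
      have hlt : ((LKAux.m n k - 1 : ℕ) : ℝ) < (n : ℝ) / k := by
        rw [lt_div_iff₀ hk0]
        exact_mod_cast hm.2.1
      have h2 : LKAux.m n k - 1 < ⌈(n : ℝ) / k⌉₊ := Nat.lt_ceil.mpr hlt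
      have h3 : LKAux.m n k ≤ ⌈(n : ℝ) / k⌉₊ := by omega
      exact_mod_cast h3
    have hpow : ((2 ^ (k - 1) : ℕ) : ℝ) * (1 / 2) = (2 : ℝ) ^ ((k : ℤ) - 2) := by
      have he1 : (k : ℤ) - 2 = ((k - 1 : ℕ) : ℤ) - 1 := by
        have : (1 : ℤ) ≤ (k : ℤ) := by exact_mod_cast hk1
        push_cast [Nat.cast_sub hk1]
        ring
      rw [he1, zpow_sub₀ (by norm_num : (2 : ℝ) ≠ 0), zpow_natCast, zpow_one]
      push_cast
      ring
    calc ((LKAux.T k G).filter (fun p => v ∈ LKAux.vertsOf k G p)).card • (1 / 2 : ℝ)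
        = (((LKAux.T k G).filter (fun p => v ∈ LKAux.vertsOf k G p)).card : ℝ) * (1 / 2) :=
          nsmul_eq_mul _ _
      _ ≤ ((2 ^ (k - 1) + LKAux.m n k : ℕ) : ℝ) * (1 / 2) := by
          apply mul_le_mul_of_nonneg_right _ (by norm_num)
          exact_mod_cast hcard
      _ = ((2 ^ (k - 1) : ℕ) : ℝ) * (1 / 2) + (LKAux.m n k : ℝ) * (1 / 2) := by
          push_cast; ring
      _ ≤ (2 : ℝ) ^ ((k : ℤ) - 2) + (⌈(n : ℝ) / k⌉₊ : ℝ) / 2 := by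
          rw [hpow]
          apply add_le_add le_rfl
          calc (LKAux.m n k : ℝ) * (1 / 2) ≤ (⌈(n : ℝ) / k⌉₊ : ℝ) * (1 / 2) := by
                apply mul_le_mul_of_nonneg_right hmceil (by norm_num)
            _ = (⌈(n : ℝ) / k⌉₊ : ℝ) / 2 := by ring
end
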